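/- arXiv:0803.2803 — 12 statements merged into one kernel-verified Lean document; each statement's English description precedes it below -/
import Mathlib

section
/- Let (F_n) be the Fibonacci numbers. For every integer n ≥ 1, F_n = Σ_{k∈ℤ} (−1)^k · C(n−1, ⌊(n−1−5k)/2⌋), where the sum runs over all integers k (only finitely many terms are nonzero). -/
/-- Binomial coefficient `C(m, j)` with integer lower index `j`,
equal to `0` when `j < 0` or `j > m`. -/
def ichoose (m : ℕ) (j : ℤ) : ℚ :=
  if j < 0 then 0 else (m.choose j.toNat : ℚ)

lemma ichoose_succ (m : ℕ) (j : ℤ) :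
    ichoose (m + 1) j = ichoose m j + ichoose m (j - 1) := by
  unfold ichoose
  rcases lt_trichotomy j 0 with h | h | h
  · simp [h, show j - 1 < 0 by omega]
  · subst h; simp
  · rw [if_neg (by omega), if_neg (by omega), if_neg (by omega)]
    have h1 : j.toNat = (j - 1).toNat + 1 := by omega
    rw [h1, Nat.choose_succ_succ']
    push_cast
    ring

lemma ichoose_symm (m : ℕ) (j : ℤ) : ichoose m j = ichoose m ((m : ℤ) - j) := by
  unfold ichoose
  rcases lt_trichotomy j 0 with h | h | h
  · rw [if_pos h, if_neg (by omega)]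
    rw [Nat.choose_eq_zero_of_lt (by omega)]
    simp
  · subst h; rw [if_neg (by omega), if_neg (by omega)]
    simp
  · rw [if_neg (by omega)]
    by_cases hm : j ≤ (m : ℤ)
    · rw [if_neg (by omega)]
      have h2 : ((m : ℤ) - j).toNat = m - j.toNat := by omega
      rw [h2, Nat.choose_symm (by omega)]
    · rw [if_pos (by omega), Nat.choose_eq_zero_of_lt (by omega)]
      simp

/-- The general summand. -/
noncomputable def aF (m : ℕ) (t : ℤ) (k : ℤ) : ℚ :=
  (-1 : ℚ) ^ k * ichoose m (((m : ℤ) + t - 5 * k) / 2)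

lemma aF_bounds {m : ℕ} {t k : ℤ} (h : aF m t k ≠ 0) :
    0 ≤ (m : ℤ) + t - 5 * k ∧ ((m : ℤ) + t - 5 * k) / 2 ≤ (m : ℤ) := by
  unfold aF ichoose at h
  have h1 : ¬ ((m : ℤ) + t - 5 * k) / 2 < 0 := by
    intro hc; rw [if_pos hc] at h; simp at h
  rw [if_neg h1] at h
  have h2 : (((m : ℤ) + t - 5 * k) / 2).toNat ≤ m := by
    by_contra hc
    rw [Nat.choose_eq_zero_of_lt (by omega)] at h
    simp at h
  omega

lemma aF_support (m : ℕ) (t : ℤ) : (Function.support (aF m t)).Finite := by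
  apply Set.Finite.subset (Set.finite_Icc ((t - (m : ℤ) - 5) / 5) (((m : ℤ) + t) / 5 + 1))
  intro k hk
  have := aF_bounds hk
  simp only [Set.mem_Icc]
  omega

/-- The general sum. -/
noncomputable def aS (m : ℕ) (t : ℤ) : ℚ := ∑ᶠ k : ℤ, aF m t k

lemma neg_one_zpow_neg (k : ℤ) : (-1 : ℚ) ^ (-k) = (-1 : ℚ) ^ k := by
  rw [zpow_neg, ← inv_zpow, inv_neg, inv_one]

lemma aS_shift (m : ℕ) (t : ℤ) : aS m (t + 5) = -aS m t := by
  have h1 : aS m (t + 5) = ∑ᶠ k : ℤ, aF m (t + 5) (Equiv.addRight (1 : ℤ) k) :=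
    (finsum_comp_equiv (Equiv.addRight 1)).symm
  rw [h1]
  have h2 : ∀ k : ℤ, aF m (t + 5) (Equiv.addRight (1 : ℤ) k) = -aF m t k := by
    intro k
    show aF m (t + 5) (k + 1) = -aF m t k
    unfold aF
    rw [zpow_add_one₀ (by norm_num : (-1 : ℚ) ≠ 0)]
    have h3 : (m : ℤ) + (t + 5) - 5 * (k + 1) = (m : ℤ) + t - 5 * k := by ring
    rw [h3]; ring
  rw [finsum_congr h2, finsum_neg_distrib]
  rfl

lemma aS_reflect (m : ℕ) (t : ℤ) : aS m t = aS m (1 - t) := by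
  have h1 : aS m t = ∑ᶠ k : ℤ, aF m t (Equiv.neg ℤ k) :=
    (finsum_comp_equiv (Equiv.neg ℤ)).symm
  rw [h1]
  apply finsum_congr
  intro k
  show aF m t (-k) = aF m (1 - t) k
  unfold aF
  rw [neg_one_zpow_neg]
  congr 1
  rw [ichoose_symm m (((m : ℤ) + t - 5 * (-k)) / 2)]
  congr 1
  omega

lemma aS_pascal (m : ℕ) (t : ℤ) : aS (m + 1) t = aS m (t + 1) + aS m (t - 1) := by
  unfold aS
  rw [← finsum_add_distrib (aF_support m (t + 1)) (aF_support m (t - 1))]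
  apply finsum_congr
  intro k
  unfold aF
  have h1 : ((m : ℤ) + 1 + t - 5 * k) / 2 = ((m : ℤ) + (t + 1) - 5 * k) / 2 := by
    congr 1; ring
  have h2 : ((m : ℤ) + (t + 1) - 5 * k) / 2 - 1 = ((m : ℤ) + (t - 1) - 5 * k) / 2 := by
    omega
  push_cast
  rw [h1, ichoose_succ, h2]
  ring

lemma aS_three (m : ℕ) : aS m 3 = 0 := by
  have h1 := aS_shift m (-2)
  have h2 := aS_reflect m (-2)
  norm_num at h1 h2
  linarith

lemma aS_zero : aS 0 0 = 1 := by
  unfold aS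
  rw [finsum_eq_single (aF 0 0) 0]
  · unfold aF ichoose; norm_num
  · intro x hx
    unfold aF ichoose
    have : ((0 : ℤ) + 0 - 5 * x) / 2 < 0 ∨ 1 ≤ ((0 : ℤ) + 0 - 5 * x) / 2 := by omega
    rcases this with h | h
    · rw [if_pos (by exact_mod_cast h)]; ring
    · rw [if_neg (by push_cast; omega), Nat.choose_eq_zero_of_lt (by omega)]
      norm_num

lemma aS_one : aS 1 0 = 1 := by
  unfold aS
  rw [finsum_eq_single (aF 1 0) 0]
  · unfold aF ichoose; norm_num
  · intro x hx
    unfold aF ichoose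
    have : ((1 : ℤ) + 0 - 5 * x) / 2 < 0 ∨ 2 ≤ ((1 : ℤ) + 0 - 5 * x) / 2 := by omega
    rcases this with h | h
    · rw [if_pos (by push_cast; omega)]; ring
    · rw [if_neg (by push_cast; omega), Nat.choose_eq_zero_of_lt (by omega)]
      norm_num

lemma aS_fib (m : ℕ) : aS m 0 = Nat.fib (m + 1) := by
  induction m using Nat.twoStepInduction with
  | zero => simpa using aS_zero
  | one => simpa using aS_one
  | more n ih1 ih2 =>
    have h1 := aS_pascal (n + 1) 0
    have h2 := aS_reflect (n + 1) 0
    have h3 := aS_pascal n (-1)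
    have h4 := aS_reflect n (-2)
    have h5 := aS_three n
    norm_num at h1 h2 h3 h4
    have heq : aS (n + 2) 0 = aS (n + 1) 0 + aS n 0 := by
      rw [h1, ← h2, h3, h4, h5]; ring
    have hf : Nat.fib (n + 2 + 1) = Nat.fib (n + 1) + Nat.fib (n + 1 + 1) := by
      rw [show n + 2 + 1 = n + 1 + 2 from rfl]; exact Nat.fib_add_two
    rw [heq, ih1, ih2, hf]
    push_cast
    ring

/-- Andrews' identity: for `n ≥ 1`,
`F_n = Σ_{k∈ℤ} (−1)^k · C(n−1, ⌊(n−1−5k)/2⌋)`. -/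
theorem fib_eq_finsum_choose_floor (n : ℕ) (hn : 1 ≤ n) :
    (Nat.fib n : ℚ) =
      ∑ᶠ k : ℤ, (-1 : ℚ) ^ k * ichoose (n - 1) ⌊((n : ℚ) - 1 - 5 * (k : ℚ)) / 2⌋ := by
  obtain ⟨m, rfl⟩ : ∃ m, n = m + 1 := ⟨n - 1, by omega⟩
  have key : ∀ k : ℤ,
      (-1 : ℚ) ^ k * ichoose (m + 1 - 1) ⌊(((m + 1 : ℕ) : ℚ) - 1 - 5 * (k : ℚ)) / 2⌋
        = aF m 0 k := by
    intro k
    have hfl : ⌊(((m + 1 : ℕ) : ℚ) - 1 - 5 * (k : ℚ)) / 2⌋ = ((m : ℤ) + 0 - 5 * k) / 2 := by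
      have h1 : (((m + 1 : ℕ) : ℚ) - 1 - 5 * (k : ℚ)) / 2
          = (((m : ℤ) - 5 * k : ℤ) : ℚ) / ((2 : ℕ) : ℚ) := by
        push_cast; ring
      rw [h1, Rat.floor_intCast_div_natCast]
      push_cast
      omega
    rw [hfl, show m + 1 - 1 = m from rfl]
    rfl
  rw [finsum_congr key]
  have := aS_fib m
  unfold aS at this
  rw [← this]
end

section
/- Let (F_n) be the Fibonacci numbers. For every integer n ≥ 0, F_{2n+1} = Σ_{j∈ℤ} [ C(2n+1, n−5j) − C(2n+1, n−5j−1) ], where the sum runs over all integers j (only finitely many terms are nonzero). -/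
lemma ichoose_support {m : ℕ} {j : ℤ} (h : ichoose m j ≠ 0) : 0 ≤ j ∧ j ≤ m := by
  unfold ichoose at h
  split at h
  · exact absurd rfl h
  · rename_i hj
    push_neg at hj
    refine ⟨hj, ?_⟩
    by_contra hlt
    push_neg at hlt
    have : m < j.toNat := by omega
    rw [Nat.choose_eq_zero_of_lt this] at h
    simp at h

lemma ichoose_succ2 (m : ℕ) (j : ℤ) :
    ichoose (m + 1 + 1) j = ichoose m j + 2 * ichoose m (j - 1) + ichoose m (j - 2) := by
  rw [ichoose_succ (m + 1) j, ichoose_succ m j, ichoose_succ m (j - 1)]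
  rw [show j - 1 - 1 = j - 2 by ring]
  ring

/-- The auxiliary sum `A n k = Σ_j C(2n+1, n-5j+k)`. -/
noncomputable def Aaux (n : ℕ) (k : ℤ) : ℚ :=
  ∑ᶠ j : ℤ, ichoose (2 * n + 1) ((n : ℤ) - 5 * j + k)

lemma Aaux_support_finite (n : ℕ) (k : ℤ) :
    (Function.support fun j : ℤ => ichoose (2 * n + 1) ((n : ℤ) - 5 * j + k)).Finite := by
  apply Set.Finite.subset (Set.finite_Icc (-((n : ℤ) + k.natAbs + 1)) ((n : ℤ) + k.natAbs + 1))
  intro j hj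
  obtain ⟨h1, h2⟩ := ichoose_support hj
  simp only [Set.mem_Icc]
  push_cast at h2
  omega

lemma Aaux_period (n : ℕ) (k : ℤ) : Aaux n (k + 5) = Aaux n k := by
  unfold Aaux
  rw [← finsum_comp_equiv (Equiv.subRight (1 : ℤ))
    (f := fun j => ichoose (2 * n + 1) ((n : ℤ) - 5 * j + k))]
  exact finsum_congr fun j => by
    simp only [Equiv.subRight_apply]
    congr 1
    ring

lemma Aaux_succ (n : ℕ) (k : ℤ) :
    Aaux (n + 1) k = Aaux n (k + 1) + 2 * Aaux n k + Aaux n (k - 1) := by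
  have step : ∀ j : ℤ, ichoose (2 * (n + 1) + 1) (((n : ℤ) + 1) - 5 * j + k) =
      ichoose (2 * n + 1) ((n : ℤ) - 5 * j + (k + 1)) +
        (ichoose (2 * n + 1) ((n : ℤ) - 5 * j + k) +
          (ichoose (2 * n + 1) ((n : ℤ) - 5 * j + k) +
            ichoose (2 * n + 1) ((n : ℤ) - 5 * j + (k - 1)))) := by
    intro j
    rw [show 2 * (n + 1) + 1 = (2 * n + 1) + 1 + 1 by ring, ichoose_succ2]
    rw [show (n : ℤ) + 1 - 5 * j + k = (n : ℤ) - 5 * j + (k + 1) by ring]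
    rw [show (n : ℤ) - 5 * j + (k + 1) - 1 = (n : ℤ) - 5 * j + k by ring]
    rw [show (n : ℤ) - 5 * j + (k + 1) - 2 = (n : ℤ) - 5 * j + (k - 1) by ring]
    ring
  unfold Aaux
  push_cast
  rw [finsum_congr step]
  rw [finsum_add_distrib (Aaux_support_finite n (k + 1))
    (Set.Finite.subset ((Aaux_support_finite n k).union
      ((Aaux_support_finite n k).union (Aaux_support_finite n (k - 1))))
      (Function.support_add _ _ |>.trans (Set.union_subset_union_right _
        (Function.support_add _ _))))]
  rw [finsum_add_distrib (Aaux_support_finite n k)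
    (Set.Finite.subset ((Aaux_support_finite n k).union (Aaux_support_finite n (k - 1)))
      (Function.support_add _ _))]
  rw [finsum_add_distrib (Aaux_support_finite n k) (Aaux_support_finite n (k - 1))]
  ring

/-- The main sum. -/
noncomputable def Ssum (n : ℕ) : ℚ :=
  ∑ᶠ j : ℤ, (ichoose (2 * n + 1) ((n : ℤ) - 5 * j)
    - ichoose (2 * n + 1) ((n : ℤ) - 5 * j - 1))

lemma Ssum_eq (n : ℕ) : Ssum n = Aaux n 0 - Aaux n (-1) := by
  unfold Ssum Aaux
  have h0 : (Function.support fun j : ℤ => ichoose (2 * n + 1) ((n : ℤ) - 5 * j)).Finite := by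
    have := Aaux_support_finite n 0
    simpa only [add_zero] using this
  have h1 : (Function.support fun j : ℤ => ichoose (2 * n + 1) ((n : ℤ) - 5 * j - 1)).Finite := by
    have := Aaux_support_finite n (-1)
    simpa only [← sub_eq_add_neg] using this
  have A0 : (∑ᶠ j : ℤ, ichoose (2 * n + 1) ((n : ℤ) - 5 * j + 0)) =
      ∑ᶠ j : ℤ, ichoose (2 * n + 1) ((n : ℤ) - 5 * j) :=
    finsum_congr fun j => by rw [add_zero]
  have A1 : (∑ᶠ j : ℤ, ichoose (2 * n + 1) ((n : ℤ) - 5 * j + (-1))) =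
      ∑ᶠ j : ℤ, ichoose (2 * n + 1) ((n : ℤ) - 5 * j - 1) :=
    finsum_congr fun j => by rw [show (n : ℤ) - 5 * j + (-1) = (n : ℤ) - 5 * j - 1 by ring]
  rw [finsum_sub_distrib h0 h1, A0, A1]

lemma Ssum_rec (n : ℕ) : Ssum (n + 2) = 3 * Ssum (n + 1) - Ssum n := by
  rw [Ssum_eq, Ssum_eq, Ssum_eq]
  rw [show n + 2 = (n + 1) + 1 by ring]
  rw [Aaux_succ (n + 1) 0, Aaux_succ (n + 1) (-1)]
  rw [Aaux_succ n, Aaux_succ n, Aaux_succ n, Aaux_succ n, Aaux_succ n, Aaux_succ n]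
  norm_num
  have h1 : Aaux n (-3) = Aaux n 2 := by
    have := Aaux_period n (-3)
    norm_num at this
    exact this.symm
  rw [h1]
  ring

lemma Ssum_finite_sum (n : ℕ) : Ssum n =
    ∑ j ∈ Finset.Icc (-(n : ℤ) - 1) ((n : ℤ) + 1),
      (ichoose (2 * n + 1) ((n : ℤ) - 5 * j)
        - ichoose (2 * n + 1) ((n : ℤ) - 5 * j - 1)) := by
  unfold Ssum
  apply finsum_eq_sum_of_support_subset
  intro j hj
  simp only [Finset.coe_Icc, Set.mem_Icc]
  have : ichoose (2 * n + 1) ((n : ℤ) - 5 * j) ≠ 0 ∨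
      ichoose (2 * n + 1) ((n : ℤ) - 5 * j - 1) ≠ 0 := by
    by_contra hc
    push_neg at hc
    simp only [Function.mem_support, hc.1, hc.2, sub_zero] at hj
    exact hj rfl
  rcases this with h | h <;> obtain ⟨h1, h2⟩ := ichoose_support h <;> push_cast at h2 <;> omega

lemma Ssum_zero : Ssum 0 = 1 := by
  rw [Ssum_finite_sum]
  simp only [Nat.cast_zero]
  rw [show Finset.Icc (-(0 : ℤ) - 1) ((0 : ℤ) + 1) = {-1, 0, 1} by decide]
  norm_num [ichoose]
  norm_num [Int.toNat, Nat.choose]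

lemma Ssum_one : Ssum 1 = 2 := by
  rw [Ssum_finite_sum]
  simp only [Nat.cast_one]
  rw [show Finset.Icc (-(1 : ℤ) - 1) ((1 : ℤ) + 1) = {-2, -1, 0, 1, 2} by decide]
  norm_num [ichoose]
  norm_num [Int.toNat, Nat.choose]

/-- `F_{2n+1} = Σ_{j∈ℤ} [ C(2n+1, n−5j) − C(2n+1, n−5j−1) ]`. -/
theorem fib_odd_eq_finsum_choose (n : ℕ) :
    (Nat.fib (2 * n + 1) : ℚ) =
      ∑ᶠ j : ℤ, (ichoose (2 * n + 1) ((n : ℤ) - 5 * j)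
        - ichoose (2 * n + 1) ((n : ℤ) - 5 * j - 1)) := by
  have key : ∀ m : ℕ, (Nat.fib (2 * m + 1) : ℚ) = Ssum m ∧
      (Nat.fib (2 * (m + 1) + 1) : ℚ) = Ssum (m + 1) := by
    intro m
    induction m with
    | zero =>
      constructor
      · rw [Ssum_zero]; norm_num
      · rw [Ssum_one]; norm_num [Nat.fib]
    | succ k ih =>
      refine ⟨ih.2, ?_⟩
      have e5 : Nat.fib (2 * k + 5) = Nat.fib (2 * k + 3) + Nat.fib (2 * k + 4) := by
        rw [show 2 * k + 5 = 2 * k + 3 + 2 by ring]; exact Nat.fib_add_two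
      have e4 : Nat.fib (2 * k + 4) = Nat.fib (2 * k + 2) + Nat.fib (2 * k + 3) := by
        rw [show 2 * k + 4 = 2 * k + 2 + 2 by ring]; exact Nat.fib_add_two
      have e3 : Nat.fib (2 * k + 3) = Nat.fib (2 * k + 1) + Nat.fib (2 * k + 2) := by
        rw [show 2 * k + 3 = 2 * k + 1 + 2 by ring]; exact Nat.fib_add_two
      have hnat : Nat.fib (2 * k + 5) + Nat.fib (2 * k + 1) = 3 * Nat.fib (2 * k + 3) := by
        rw [e5, e4, e3]; ring
      have hfib : (Nat.fib (2 * (k + 1 + 1) + 1) : ℚ) =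
          3 * (Nat.fib (2 * (k + 1) + 1) : ℚ) - (Nat.fib (2 * k + 1) : ℚ) := by
        rw [show 2 * (k + 1 + 1) + 1 = 2 * k + 5 by ring, show 2 * (k + 1) + 1 = 2 * k + 3 by ring]
        have : (Nat.fib (2 * k + 5) : ℚ) + (Nat.fib (2 * k + 1) : ℚ)
            = 3 * (Nat.fib (2 * k + 3) : ℚ) := by exact_mod_cast congrArg Nat.cast hnat
        linarith
      rw [hfib, ih.1, ih.2, ← Ssum_rec]
  have := (key n).1
  rw [this]
  rfl
end

section
/- Let (F_n) be the Fibonacci numbers. For every integer n ≥ 0, F_{2n+2} = Σ_{j∈ℤ} [ C(2n+2, n−5j) − C(2n+2, n−5j−1) ], where the sum runs over all integers j (only finitely many terms are nonzero). -/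
def S (m : ℕ) (r : ZMod 5) : ℚ :=
  ∑ k ∈ Finset.range (m + 1), if ((k : ℕ) : ZMod 5) = r then (m.choose k : ℚ) else 0

lemma S_pascal (m : ℕ) (r : ZMod 5) : S (m + 1) r = S m r + S m (r - 1) := by
  conv_lhs => rw [S]
  rw [Finset.sum_range_succ' (fun k => if ((k : ℕ) : ZMod 5) = r then ((m+1).choose k : ℚ) else 0) (m+1)]
  have h1 : ∀ k ∈ Finset.range (m+1),
      (if (((k+1 : ℕ)) : ZMod 5) = r then ((m+1).choose (k+1) : ℚ) else 0)
      = (if (((k+1 : ℕ)) : ZMod 5) = r then (m.choose k : ℚ) else 0)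
        + (if (((k+1 : ℕ)) : ZMod 5) = r then (m.choose (k+1) : ℚ) else 0) := by
    intro k _
    rw [Nat.choose_succ_succ]
    push_cast
    split <;> simp
  rw [Finset.sum_congr rfl h1, Finset.sum_add_distrib]
  have h2 : ∑ k ∈ Finset.range (m+1), (if (((k+1 : ℕ)) : ZMod 5) = r then (m.choose k : ℚ) else 0)
      = S m (r - 1) := by
    unfold S
    apply Finset.sum_congr rfl
    intro k _
    have h : (((k+1 : ℕ)) : ZMod 5) = r ↔ ((k : ℕ) : ZMod 5) = r - 1 := by
      push_cast
      constructor <;> intro h <;> [rw [← h]; rw [h]] <;> ring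
    simp only [h]
  have h3 : (∑ k ∈ Finset.range (m+1), (if (((k+1 : ℕ)) : ZMod 5) = r then (m.choose (k+1) : ℚ) else 0))
      + (if ((0 : ℕ) : ZMod 5) = r then (m.choose 0 : ℚ) else 0) = S m r := by
    rw [← Finset.sum_range_succ' (fun k => if ((k:ℕ):ZMod 5) = r then (m.choose k : ℚ) else 0) (m+1)]
    unfold S
    rw [Finset.sum_range_succ]
    simp
  have h0 : (if ((0:ℕ):ZMod 5) = r then ((m+1).choose 0 : ℚ) else 0)
      = (if ((0:ℕ):ZMod 5) = r then (m.choose 0 : ℚ) else 0) := by simp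
  rw [h2, h0]
  linarith [h3]

lemma S_symm (m : ℕ) (r : ZMod 5) : S m r = S m ((m : ZMod 5) - r) := by
  unfold S
  rw [← Finset.sum_range_reflect]
  apply Finset.sum_congr rfl
  intro k hk
  rw [Finset.mem_range] at hk
  have hk' : k ≤ m := by omega
  have e1 : m + 1 - 1 - k = m - k := by omega
  rw [e1, Nat.choose_symm hk']
  have e2 : (((m - k : ℕ)) : ZMod 5) = (m : ZMod 5) - (k : ZMod 5) := by
    push_cast [Nat.cast_sub hk']
    ring
  rw [e2]
  have h : ((m : ZMod 5) - (k : ZMod 5) = r) ↔ ((k : ℕ) : ZMod 5) = (m : ZMod 5) - r := by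
    constructor <;> intro h <;> [rw [← h]; rw [h]] <;> ring
  simp only [h]

lemma key (n : ℕ) :
    S (2*n+2) ((n : ZMod 5)) - S (2*n+2) ((n : ZMod 5) - 1) = (Nat.fib (2*n+2) : ℚ) ∧
    S (2*n+2) ((n : ZMod 5) + 1) - S (2*n+2) ((n : ZMod 5) - 1) = (Nat.fib (2*n+3) : ℚ) := by
  induction n with
  | zero =>
      constructor <;>
      · show S 2 _ - S 2 _ = _
        unfold S
        simp (config := { decide := true }) [Finset.sum_range_succ]
  | succ n ih =>
      obtain ⟨hX, hY⟩ := ih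
      set r : ZMod 5 := (n : ZMod 5) with hr
      have hcast : (((n+1 : ℕ)) : ZMod 5) = r + 1 := by push_cast; ring
      have h5 : (5 : ZMod 5) = 0 := rfl
      have p1 : ∀ s : ZMod 5, S (2*n+4) s
          = S (2*n+2) s + 2 * S (2*n+2) (s-1) + S (2*n+2) (s-1-1) := by
        intro s
        have e : 2*n+4 = (2*n+2) + 1 + 1 := by ring
        rw [e, S_pascal (2*n+2+1) s, S_pascal (2*n+2) s, S_pascal (2*n+2) (s-1)]
        ring
      have hmod : ((2*n+2 : ℕ) : ZMod 5) = 2*r + 2 := by push_cast; ring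
      have sym1 : S (2*n+2) (r - 1 - 1) = S (2*n+2) (r - 1) := by
        have h := S_symm (2*n+2) (r + 3)
        rw [hmod, show 2*r + 2 - (r + 3) = r - 1 from by ring] at h
        rw [show r - 1 - 1 = r + 3 from by linear_combination -h5]
        exact h
      have sym2 : S (2*n+2) (r + 2) = S (2*n+2) r := by
        have h := S_symm (2*n+2) (r + 2)
        rw [hmod, show 2*r + 2 - (r + 2) = r from by ring] at h
        exact h
      have fq1 : (Nat.fib (2*n+4) : ℚ) = Nat.fib (2*n+2) + Nat.fib (2*n+3) := by
        have h := Nat.fib_add_two (n := 2*n+2)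
        rw [show 2*n+2+2 = 2*n+4 from by ring, show 2*n+2+1 = 2*n+3 from by ring] at h
        exact_mod_cast h
      have fq2 : (Nat.fib (2*n+5) : ℚ) = Nat.fib (2*n+3) + Nat.fib (2*n+4) := by
        have h := Nat.fib_add_two (n := 2*n+3)
        rw [show 2*n+3+2 = 2*n+5 from by ring, show 2*n+3+1 = 2*n+4 from by ring] at h
        exact_mod_cast h
      have goalX : S (2*n+4) (r+1) - S (2*n+4) r = (Nat.fib (2*n+4) : ℚ) := by
        rw [p1 (r+1), p1 r, show r+1-1 = r from by ring, sym1, fq1]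
        linarith [hX, hY]
      have goalY : S (2*n+4) (r+2) - S (2*n+4) r = (Nat.fib (2*n+5) : ℚ) := by
        rw [p1 (r+2), p1 r, show r+2-1 = r+1 from by ring, show r+1-1 = r from by ring,
          sym1, sym2, fq2, fq1]
        linarith [hX, hY]
      constructor
      · rw [show 2*(n+1)+2 = 2*n+4 from by ring, hcast, show r+1-1 = r from by ring]
        exact goalX
      · rw [show 2*(n+1)+2 = 2*n+4 from by ring, show 2*(n+1)+3 = 2*n+5 from by ring,
          hcast, show r+1-1 = r from by ring, show r+1+1 = r+2 from by ring]
        exact goalY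

lemma ichoose_eq_zero_of_gt (m : ℕ) (j : ℤ) (h : (m : ℤ) < j) : ichoose m j = 0 := by
  unfold ichoose
  rw [if_neg (by omega)]
  rw [Nat.choose_eq_zero_of_lt (by omega)]
  simp

lemma ichoose_eq_zero_of_neg (m : ℕ) (j : ℤ) (h : j < 0) : ichoose m j = 0 := by
  unfold ichoose
  rw [if_pos h]

lemma sum_ichoose_eq (m : ℕ) (c A B : ℤ) (hA : (m : ℤ) ≤ c - 5*A) (hB : c - 5*B ≤ 0) :
    ∑ j ∈ Finset.Icc A B, ichoose m (c - 5*j) = S m ((c : ZMod 5)) := by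
  have hS : S m ((c : ZMod 5)) = ∑ k ∈ (Finset.range (m+1)).filter
      (fun k => ((k : ℕ) : ZMod 5) = (c : ZMod 5)), (m.choose k : ℚ) := by
    rw [Finset.sum_filter]; rfl
  rw [hS]
  rw [← Finset.sum_filter_of_ne (p := fun j => 0 ≤ c - 5*j ∧ c - 5*j ≤ (m : ℤ))
      (by
        intro j _ hne
        by_contra hp
        push_neg at hp
        rcases lt_or_ge (c - 5*j) 0 with h | h
        · exact hne (ichoose_eq_zero_of_neg m _ h)
        · exact hne (ichoose_eq_zero_of_gt m _ (by omega)))]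
  apply Finset.sum_nbij' (i := fun j => (c - 5*j).toNat) (j := fun k => (c - (k : ℤ)) / 5)
  · intro j hj
    simp only [Finset.mem_filter, Finset.mem_Icc] at hj ⊢
    obtain ⟨⟨hj1, hj2⟩, h0, hm⟩ := hj
    refine ⟨by rw [Finset.mem_range]; omega, ?_⟩
    have ht : (((c - 5*j).toNat : ℤ)) = c - 5*j := Int.toNat_of_nonneg h0
    have := congrArg (fun x : ℤ => (x : ZMod 5)) ht
    push_cast at this
    rw [this, show (5 : ZMod 5) = 0 from rfl]
    ring
  · intro k hk
    simp only [Finset.mem_filter, Finset.mem_range] at hk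
    obtain ⟨hk1, hk2⟩ := hk
    have hdvd : (5 : ℤ) ∣ c - (k : ℤ) := by
      apply (ZMod.intCast_zmod_eq_zero_iff_dvd _ 5).mp
      push_cast
      rw [hk2]
      ring
    simp only [Finset.mem_filter, Finset.mem_Icc]
    obtain ⟨t, ht⟩ := hdvd
    have hq : (c - (k : ℤ)) / 5 = t := by omega
    refine ⟨⟨?_, ?_⟩, ?_, ?_⟩ <;> omega
  · intro j hj
    simp only [Finset.mem_filter, Finset.mem_Icc] at hj
    obtain ⟨⟨hj1, hj2⟩, h0, hm⟩ := hj
    have : (((c - 5*j).toNat : ℤ)) = c - 5*j := Int.toNat_of_nonneg h0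
    omega
  · intro k hk
    simp only [Finset.mem_filter, Finset.mem_range] at hk
    obtain ⟨hk1, hk2⟩ := hk
    have hdvd : (5 : ℤ) ∣ c - (k : ℤ) := by
      apply (ZMod.intCast_zmod_eq_zero_iff_dvd _ 5).mp
      push_cast
      rw [hk2]
      ring
    obtain ⟨t, ht⟩ := hdvd
    have hq : (c - (k : ℤ)) / 5 = t := by omega
    rw [hq]
    omega
  · intro j hj
    simp only [Finset.mem_filter, Finset.mem_Icc] at hj
    obtain ⟨⟨hj1, hj2⟩, h0, hm⟩ := hj
    unfold ichoose
    rw [if_neg (by omega)]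

/-- `F_{2n+2} = Σ_{j∈ℤ} [ C(2n+2, n−5j) − C(2n+2, n−5j−1) ]`. -/
theorem fib_even_eq_finsum_choose (n : ℕ) :
    (Nat.fib (2 * n + 2) : ℚ) =
      ∑ᶠ j : ℤ, (ichoose (2 * n + 2) ((n : ℤ) - 5 * j)
        - ichoose (2 * n + 2) ((n : ℤ) - 5 * j - 1)) := by
  have hsupp : (Function.support fun j : ℤ =>
      ichoose (2 * n + 2) ((n : ℤ) - 5 * j) - ichoose (2 * n + 2) ((n : ℤ) - 5 * j - 1))
      ⊆ (Finset.Icc (-(n:ℤ) - 1) (n : ℤ) : Finset ℤ) := by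
    intro j hj
    simp only [Function.mem_support] at hj
    simp only [Finset.coe_Icc, Set.mem_Icc]
    by_contra hc
    push_neg at hc
    apply hj
    rcases lt_or_ge j (-(n:ℤ) - 1) with h | h
    · rw [ichoose_eq_zero_of_gt _ _ (by push_cast; omega),
        ichoose_eq_zero_of_gt _ _ (by push_cast; omega)]
      ring
    · have h2 : (n : ℤ) < j := hc h
      rw [ichoose_eq_zero_of_neg _ _ (by omega), ichoose_eq_zero_of_neg _ _ (by omega)]
      ring
  rw [finsum_eq_finset_sum_of_support_subset _ hsupp, Finset.sum_sub_distrib]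
  have hA1 := sum_ichoose_eq (2*n+2) (n : ℤ) (-(n:ℤ)-1) (n : ℤ) (by push_cast; omega) (by omega)
  have hA2 := sum_ichoose_eq (2*n+2) ((n : ℤ)-1) (-(n:ℤ)-1) (n : ℤ) (by push_cast; omega) (by omega)
  have e : ∀ j : ℤ, (n : ℤ) - 5*j - 1 = ((n : ℤ) - 1) - 5*j := fun j => by ring
  simp only [e]
  rw [hA1, hA2]
  have c1 : (((n : ℤ)) : ZMod 5) = ((n : ℕ) : ZMod 5) := by push_cast; ring
  have c2 : ((((n : ℤ) - 1 : ℤ)) : ZMod 5) = ((n : ℕ) : ZMod 5) - 1 := by push_cast; ring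
  rw [c1, c2]
  exact (key n).1.symm
end

section
/- Let (F_n) be the Fibonacci numbers. For every integer n ≥ 0, F_{2n+2} = Σ_{j∈ℤ} [ C(2n+1, n−5j) − C(2n+1, n−5j−2) ], where the sum runs over all integers j (only finitely many terms are nonzero). -/
/-- Sum of `C(m,k)` over `0 ≤ k ≤ m` with `k ≡ r (mod 5)`. -/
def S5 (m : ℕ) (r : ZMod 5) : ℚ :=
  ∑ k ∈ Finset.range (m + 1), if (k : ZMod 5) = r then (m.choose k : ℚ) else 0

lemma S5_succ (m : ℕ) (r : ZMod 5) : S5 (m + 1) r = S5 m r + S5 m (r - 1) := by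
  have h1 : S5 (m + 1) r
      = (∑ i ∈ Finset.range (m + 1),
          if ((i + 1 : ℕ) : ZMod 5) = r then (((m + 1).choose (i + 1) : ℕ) : ℚ) else 0)
        + (if ((0 : ℕ) : ZMod 5) = r then (((m + 1).choose 0 : ℕ) : ℚ) else 0) := by
    rw [S5]
    exact Finset.sum_range_succ' _ _
  have key : ∀ i : ℕ,
      (if ((i + 1 : ℕ) : ZMod 5) = r then (((m + 1).choose (i + 1) : ℕ) : ℚ) else 0)
      = (if ((i + 1 : ℕ) : ZMod 5) = r then ((m.choose (i + 1) : ℕ) : ℚ) else 0)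
        + (if (i : ZMod 5) = r - 1 then ((m.choose i : ℕ) : ℚ) else 0) := by
    intro i
    have hc : (((i + 1 : ℕ) : ZMod 5) = r) ↔ ((i : ZMod 5) = r - 1) := by
      push_cast
      constructor
      · intro h; linear_combination h
      · intro h; linear_combination h
    by_cases h : ((i + 1 : ℕ) : ZMod 5) = r
    · rw [if_pos h, if_pos h, if_pos (hc.mp h), Nat.choose_succ_succ]
      push_cast; ring
    · rw [if_neg h, if_neg h, if_neg (fun hh => h (hc.mpr hh))]; ring
  rw [h1, Finset.sum_congr rfl (fun i _ => key i), Finset.sum_add_distrib]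
  have h3 : (∑ i ∈ Finset.range (m + 1),
        if ((i + 1 : ℕ) : ZMod 5) = r then ((m.choose (i + 1) : ℕ) : ℚ) else 0)
      + (if ((0 : ℕ) : ZMod 5) = r then ((m.choose 0 : ℕ) : ℚ) else 0) = S5 m r := by
    rw [← Finset.sum_range_succ' (fun k => if (k : ZMod 5) = r then ((m.choose k : ℕ) : ℚ) else 0) (m + 1)]
    rw [Finset.sum_range_succ, S5]
    simp [Nat.choose_succ_self]
  have h4 : (if ((0 : ℕ) : ZMod 5) = r then (((m + 1).choose 0 : ℕ) : ℚ) else 0)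
      = (if ((0 : ℕ) : ZMod 5) = r then ((m.choose 0 : ℕ) : ℚ) else 0) := by
    simp
  rw [h4]
  have : S5 m (r - 1) = ∑ i ∈ Finset.range (m + 1),
      if (i : ZMod 5) = r - 1 then ((m.choose i : ℕ) : ℚ) else 0 := rfl
  linarith [h3, this]

lemma S5_symm (m : ℕ) (r : ZMod 5) : S5 m r = S5 m ((m : ZMod 5) - r) := by
  rw [S5, S5, ← Finset.sum_range_reflect]
  apply Finset.sum_congr rfl
  intro k hk
  rw [Finset.mem_range] at hk
  have hk' : k ≤ m := Nat.lt_succ_iff.mp hk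
  have h1 : ((m + 1 - 1 - k : ℕ) : ZMod 5) = (m : ZMod 5) - (k : ZMod 5) := by
    have : m + 1 - 1 - k = m - k := by omega
    rw [this, Nat.cast_sub hk']
  have h2 : (m.choose (m + 1 - 1 - k)) = m.choose k := by
    have : m + 1 - 1 - k = m - k := by omega
    rw [this, Nat.choose_symm hk']
  rw [h1, h2]
  congr 1
  · simp only [eq_iff_iff]
    constructor
    · intro h; linear_combination -h
    · intro h; linear_combination -h

lemma key_fib (n : ℕ) :
    S5 (2 * n + 1) (n : ZMod 5) - S5 (2 * n + 1) ((n : ZMod 5) + 3)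
        = (Nat.fib (2 * n + 2) : ℚ)
    ∧ S5 (2 * n + 1) (n : ZMod 5) - S5 (2 * n + 1) ((n : ZMod 5) + 2)
        = (Nat.fib (2 * n + 1) : ℚ) := by
  induction n with
  | zero =>
      constructor <;>
      · norm_num [S5, Finset.sum_range_succ]
        norm_num [show (1 : ZMod 5) ≠ 0 by decide, show (0 : ZMod 5) ≠ 3 by decide,
          show (1 : ZMod 5) ≠ 3 by decide, show (0 : ZMod 5) ≠ 2 by decide,
          show (1 : ZMod 5) ≠ 2 by decide]
  | succ n ih =>
      obtain ⟨ih1, ih2⟩ := ih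
      have dbl : ∀ r : ZMod 5, S5 (2 * n + 3) r
          = S5 (2 * n + 1) r + 2 * S5 (2 * n + 1) (r - 1) + S5 (2 * n + 1) (r - 2) := by
        intro r
        have e1 : 2 * n + 3 = 2 * n + 2 + 1 := by ring
        have e2 : 2 * n + 2 = 2 * n + 1 + 1 := by ring
        have h1 : S5 (2 * n + 3) r = S5 (2 * n + 2) r + S5 (2 * n + 2) (r - 1) := by
          rw [e1]; exact S5_succ _ _
        have h2 : S5 (2 * n + 2) r = S5 (2 * n + 1) r + S5 (2 * n + 1) (r - 1) := by
          rw [e2]; exact S5_succ _ _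
        have h3 : S5 (2 * n + 2) (r - 1) = S5 (2 * n + 1) (r - 1) + S5 (2 * n + 1) (r - 1 - 1) := by
          rw [e2]; exact S5_succ _ _
        have h4 : r - 1 - 1 = r - 2 := by ring
        rw [h4] at h3
        rw [h1, h2, h3]; ring
      have sym : ∀ r : ZMod 5, S5 (2 * n + 1) r
          = S5 (2 * n + 1) (2 * (n : ZMod 5) + 1 - r) := by
        intro r
        have := S5_symm (2 * n + 1) r
        have hcast : ((2 * n + 1 : ℕ) : ZMod 5) = 2 * (n : ZMod 5) + 1 := by push_cast; ring
        rw [hcast] at this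
        exact this
      have h5 : (5 : ZMod 5) = 0 := by decide
      set a := S5 (2 * n + 1) (n : ZMod 5) with ha
      set b := S5 (2 * n + 1) ((n : ZMod 5) + 2) with hb
      set c := S5 (2 * n + 1) ((n : ZMod 5) + 3) with hc
      have e1 : S5 (2 * n + 1) ((n : ZMod 5) + 1) = a := by
        rw [sym ((n : ZMod 5) + 1)]
        congr 1; ring
      have e2 : S5 (2 * n + 1) ((n : ZMod 5) - 1) = b := by
        rw [sym ((n : ZMod 5) - 1)]
        congr 1; ring
      have e3 : S5 (2 * n + 1) ((n : ZMod 5) + 4) = b := by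
        rw [sym ((n : ZMod 5) + 4)]
        congr 1; linear_combination -h5
      have A' : S5 (2 * n + 3) ((n : ZMod 5) + 1) = 3 * a + b := by
        rw [dbl]
        have h1 : (n : ZMod 5) + 1 - 1 = (n : ZMod 5) := by ring
        have h2 : (n : ZMod 5) + 1 - 2 = (n : ZMod 5) - 1 := by ring
        rw [h1, h2, e1, e2]; ring
      have B' : S5 (2 * n + 3) ((n : ZMod 5) + 3) = a + 2 * b + c := by
        rw [dbl]
        have h1 : (n : ZMod 5) + 3 - 1 = (n : ZMod 5) + 2 := by ring
        have h2 : (n : ZMod 5) + 3 - 2 = (n : ZMod 5) + 1 := by ring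
        rw [h1, h2, e1]; ring
      have C' : S5 (2 * n + 3) ((n : ZMod 5) + 4) = 2 * b + 2 * c := by
        rw [dbl]
        have h1 : (n : ZMod 5) + 4 - 1 = (n : ZMod 5) + 3 := by ring
        have h2 : (n : ZMod 5) + 4 - 2 = (n : ZMod 5) + 2 := by ring
        rw [h1, h2, e3]; ring
      have i1 : 2 * (n + 1) + 1 = 2 * n + 3 := by ring
      have i2 : ((n + 1 : ℕ) : ZMod 5) = (n : ZMod 5) + 1 := by push_cast; ring
      have i3 : (n : ZMod 5) + 1 + 3 = (n : ZMod 5) + 4 := by ring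
      have i4 : (n : ZMod 5) + 1 + 2 = (n : ZMod 5) + 3 := by ring
      have f1 : Nat.fib (2 * (n + 1) + 2) = Nat.fib (2 * n + 2) + Nat.fib (2 * n + 3) := by
        rw [show 2 * (n + 1) + 2 = (2 * n + 2) + 2 by ring, Nat.fib_add_two]
      have f2 : Nat.fib (2 * n + 3) = Nat.fib (2 * n + 1) + Nat.fib (2 * n + 2) := by
        rw [show 2 * n + 3 = (2 * n + 1) + 2 by ring, Nat.fib_add_two]
      constructor
      · rw [i1, i2, i3, A', C', f1, f2]
        push_cast
        linarith [ih1, ih2]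
      · rw [i1, i2, i4, A', B', f2]
        push_cast
        linarith [ih1, ih2]

lemma support_subset (m : ℕ) (t : ℤ) :
    Function.support (fun j : ℤ => ichoose m (t - 5 * j))
      ⊆ ↑(Finset.Icc (-(t.natAbs : ℤ) - m) ((t.natAbs : ℤ) + m)) := by
  intro j hj
  simp only [Function.mem_support, ichoose] at hj
  have h0 : ¬ (t - 5 * j < 0) := fun h => hj (if_pos h)
  rw [if_neg h0] at hj
  have h1 : (t - 5 * j).toNat ≤ m := by
    by_contra h
    exact hj (by rw [Nat.choose_eq_zero_of_lt (by omega)]; norm_num)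
  simp only [Finset.coe_Icc, Set.mem_Icc]
  omega

lemma finsum_ichoose (m : ℕ) (t : ℤ) :
    ∑ᶠ j : ℤ, ichoose m (t - 5 * j) = S5 m (t : ZMod 5) := by
  classical
  have h5 : (5 : ZMod 5) = 0 := by decide
  rw [finsum_eq_sum_of_support_subset _ (support_subset m t)]
  have hR : S5 m (t : ZMod 5)
      = ∑ k ∈ (Finset.range (m + 1)).filter (fun k : ℕ => (k : ZMod 5) = (t : ZMod 5)),
          ((m.choose k : ℕ) : ℚ) := by
    rw [S5, Finset.sum_filter]
  rw [hR]
  set J := Finset.Icc (-(t.natAbs : ℤ) - m) ((t.natAbs : ℤ) + m) with hJ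
  have hL : ∑ j ∈ J, ichoose m (t - 5 * j)
      = ∑ j ∈ J.filter (fun j => 0 ≤ t - 5 * j ∧ t - 5 * j ≤ (m : ℤ)),
          ichoose m (t - 5 * j) := by
    rw [Finset.sum_filter_of_ne]
    intro j _ hne
    simp only [ichoose] at hne
    have h0 : ¬ (t - 5 * j < 0) := fun h => hne (if_pos h)
    rw [if_neg h0] at hne
    have h1 : (t - 5 * j).toNat ≤ m := by
      by_contra h
      exact hne (by rw [Nat.choose_eq_zero_of_lt (by omega)]; norm_num)
    omega
  rw [hL]
  apply Finset.sum_nbij' (fun j => (t - 5 * j).toNat) (fun k => (t - k) / 5)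
  · intro j hj
    simp only [Finset.mem_filter, Finset.mem_Icc] at hj
    obtain ⟨_, h0, h1⟩ := hj
    simp only [Finset.mem_filter, Finset.mem_range]
    constructor
    · omega
    · have ht : (((t - 5 * j).toNat : ℤ) : ZMod 5) = (t : ZMod 5) := by
        rw [Int.toNat_of_nonneg h0]
        push_cast
        linear_combination (-(j : ZMod 5)) * h5
      rw [← Int.cast_natCast]
      exact ht
  · intro k hk
    simp only [Finset.mem_filter, Finset.mem_range] at hk
    obtain ⟨hk1, hk2⟩ := hk
    have hdvd : (5 : ℤ) ∣ (t - k) := by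
      have : ((t - k : ℤ) : ZMod 5) = 0 := by
        push_cast
        rw [← hk2]
        ring
      exact (ZMod.intCast_zmod_eq_zero_iff_dvd _ 5).mp this
    obtain ⟨q, hq⟩ := hdvd
    have hdiv : (t - k) / 5 = q := by omega
    simp only [hJ, Finset.mem_filter, Finset.mem_Icc, hdiv]
    omega
  · intro j hj
    simp only [Finset.mem_filter, Finset.mem_Icc] at hj
    obtain ⟨_, h0, _⟩ := hj
    rw [Int.toNat_of_nonneg h0]
    omega
  · intro k hk
    simp only [Finset.mem_filter, Finset.mem_range] at hk
    obtain ⟨hk1, hk2⟩ := hk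
    have hdvd : (5 : ℤ) ∣ (t - k) := by
      have : ((t - k : ℤ) : ZMod 5) = 0 := by
        push_cast
        rw [← hk2]
        ring
      exact (ZMod.intCast_zmod_eq_zero_iff_dvd _ 5).mp this
    obtain ⟨q, hq⟩ := hdvd
    have hdiv : (t - k) / 5 = q := by omega
    rw [hdiv]
    omega
  · intro j hj
    simp only [Finset.mem_filter, Finset.mem_Icc] at hj
    obtain ⟨_, h0, _⟩ := hj
    simp only [ichoose, if_neg (not_lt.mpr h0)]

/-- `F_{2n+2} = Σ_{j∈ℤ} [ C(2n+1, n−5j) − C(2n+1, n−5j−2) ]`. -/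
theorem fib_even_eq_finsum_choose' (n : ℕ) :
    (Nat.fib (2 * n + 2) : ℚ) =
      ∑ᶠ j : ℤ, (ichoose (2 * n + 1) ((n : ℤ) - 5 * j)
        - ichoose (2 * n + 1) ((n : ℤ) - 5 * j - 2)) := by
  classical
  have hf1 : (Function.support fun j : ℤ => ichoose (2 * n + 1) ((n : ℤ) - 5 * j)).Finite :=
    Set.Finite.subset (Finset.finite_toSet _) (support_subset (2 * n + 1) (n : ℤ))
  have heq : (fun j : ℤ => ichoose (2 * n + 1) ((n : ℤ) - 5 * j - 2))
      = fun j : ℤ => ichoose (2 * n + 1) (((n : ℤ) - 2) - 5 * j) := by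
    funext j; congr 1; ring
  have hf2 : (Function.support fun j : ℤ => ichoose (2 * n + 1) ((n : ℤ) - 5 * j - 2)).Finite := by
    rw [heq]
    exact Set.Finite.subset (Finset.finite_toSet _) (support_subset (2 * n + 1) ((n : ℤ) - 2))
  rw [finsum_sub_distrib hf1 hf2, finsum_ichoose, heq, finsum_ichoose]
  have h5 : (5 : ZMod 5) = 0 := by decide
  have hc1 : (((n : ℤ) : ZMod 5)) = (n : ZMod 5) := by push_cast; ring
  have hc2 : ((((n : ℤ) - 2 : ℤ)) : ZMod 5) = (n : ZMod 5) + 3 := by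
    push_cast; linear_combination -h5
  rw [hc1, hc2]
  exact ((key_fib n).1).symm
end

section
/- Let {d_{n,k}}_{n,k≥0} be a family of rational numbers with d_{n,k} = 0 for k > n and d_{0,0} ≠ 0, and suppose there is a sequence (a_k)_{k≥0} of rationals with a_0 ≠ 0 such that d_{n+1,k+1} = Σ_{j≥0} a_j · d_{n,k+j} for all n, k ≥ 0 (the sum is finite since d_{n,m} = 0 for m > n). Let A(t) = Σ_{k≥0} a_k t^k and let h(t) be the unique formal power series over ℚ satisfying h(t) = A(t·h(t)), and let d(t) = Σ_{n≥0} d_{n,0} t^n. Then d_{n,k} = [t^n] d(t)·(t·h(t))^k for all n, k ≥ 0, and moreover [t^{n−1}] h(t) = (1/n)·[t^{n−1}] (A(t))^n for all n ≥ 1. -/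
/-- Composition `f(w(t))` of formal power series over `ℚ`, intended for `w` with zero
constant term: the coefficient of `t^n` is `∑_{k=0}^{n} f_k · [t^n] w(t)^k`. -/
noncomputable def psComp (f w : PowerSeries ℚ) : PowerSeries ℚ :=
  PowerSeries.mk fun n =>
    ∑ k ∈ Finset.range (n + 1), PowerSeries.coeff k f * PowerSeries.coeff n (w ^ k)

-- coeff of (X*h)^j vanishes below j
lemma coeff_Xmul_pow_eq_zero (h : PowerSeries ℚ) {l j : ℕ} (hl : l < j) :
    PowerSeries.coeff l ((PowerSeries.X * h) ^ j) = 0 := by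
  rw [mul_pow, PowerSeries.coeff_mul]
  apply Finset.sum_eq_zero
  rintro ⟨i, m⟩ hp
  rw [Finset.HasAntidiagonal.mem_antidiagonal] at hp
  have : i ≠ j := by omega
  simp [PowerSeries.coeff_X_pow, this]

-- Cauchy product with mk a
lemma coeff_mk_mul (a : ℕ → ℚ) (B : PowerSeries ℚ) (m : ℕ) :
    PowerSeries.coeff m (PowerSeries.mk a * B)
      = ∑ j ∈ Finset.range (m + 1), a j * PowerSeries.coeff (m - j) B := by
  rw [PowerSeries.coeff_mul, Finset.Nat.sum_antidiagonal_eq_sum_range_succ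
    (fun i l => PowerSeries.coeff i (PowerSeries.mk a) * PowerSeries.coeff l B)]
  simp [PowerSeries.coeff_mk]

-- derivative identity: m * [t^m] A^{n+1} = (n+1) * Σ_j j a_j [t^{m-j}] A^n
lemma deriv_pow_id (a : ℕ → ℚ) (n m : ℕ) :
    (m : ℚ) * PowerSeries.coeff m ((PowerSeries.mk a) ^ (n + 1))
      = (n + 1 : ℚ) * ∑ j ∈ Finset.range (m + 1),
          (j : ℚ) * (a j * PowerSeries.coeff (m - j) ((PowerSeries.mk a) ^ n)) := by
  set A := PowerSeries.mk a with hA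
  cases m with
  | zero => simp
  | succ i =>
    have h1 : PowerSeries.coeff i (PowerSeries.derivative ℚ (A ^ (n + 1)))
        = ((i : ℚ) + 1) * PowerSeries.coeff (i + 1) (A ^ (n + 1)) := by
      rw [PowerSeries.coeff_derivative]; ring
    have h2 : PowerSeries.coeff i (PowerSeries.derivative ℚ (A ^ (n + 1)))
        = (n + 1 : ℚ) * PowerSeries.coeff i (A ^ n * PowerSeries.derivative ℚ A) := by
      rw [Derivation.leibniz_pow]
      simp only [Nat.add_sub_cancel, smul_eq_mul, nsmul_eq_mul]
      rw [← map_natCast (PowerSeries.C (R := ℚ)) (n + 1), PowerSeries.coeff_C_mul]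
      push_cast; ring
    have h3 : PowerSeries.coeff i (A ^ n * PowerSeries.derivative ℚ A)
        = ∑ l ∈ Finset.range (i + 1),
            ((l : ℚ) + 1) * a (l + 1) * PowerSeries.coeff (i - l) (A ^ n) := by
      rw [mul_comm, PowerSeries.coeff_mul, Finset.Nat.sum_antidiagonal_eq_sum_range_succ
        (fun x y => PowerSeries.coeff x (PowerSeries.derivative ℚ A)
          * PowerSeries.coeff y (A ^ n))]
      refine Finset.sum_congr rfl fun l _ => ?_
      rw [PowerSeries.coeff_derivative, hA, PowerSeries.coeff_mk]
      ring
    have key : ((i : ℚ) + 1) * PowerSeries.coeff (i + 1) (A ^ (n + 1))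
        = (n + 1 : ℚ) * ∑ l ∈ Finset.range (i + 1),
            ((l : ℚ) + 1) * a (l + 1) * PowerSeries.coeff (i - l) (A ^ n) := by
      rw [← h3, ← h1, h2]
    rw [Finset.sum_range_succ']
    push_cast
    rw [key]
    simp [mul_comm, mul_assoc, mul_left_comm]

/-- A lower triangular array `d_{n,k}` with `d_{0,0} ≠ 0` satisfying the `A`-sequence
recurrence `d_{n+1,k+1} = Σ_{j≥0} a_j d_{n,k+j}` with `a_0 ≠ 0` is the proper Riordan
array `(d(t), h(t))` where `d(t)` generates the first column and `h(t) = A(t·h(t))`;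
moreover `[t^{n−1}] h(t) = (1/n)·[t^{n−1}] A(t)^n`. -/
theorem riordan_array_characterization (d : ℕ → ℕ → ℚ) (a : ℕ → ℚ)
    (htri : ∀ n k, n < k → d n k = 0) (hd00 : d 0 0 ≠ 0) (ha0 : a 0 ≠ 0)
    (hrec : ∀ n k, d (n + 1) (k + 1) = ∑ᶠ j : ℕ, a j * d n (k + j))
    (A : PowerSeries ℚ) (hA : A = PowerSeries.mk a)
    (h : PowerSeries ℚ) (hh : h = psComp A (PowerSeries.X * h))
    (dgen : PowerSeries ℚ) (hdgen : dgen = PowerSeries.mk fun n => d n 0) :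
    (∀ n k, d n k = PowerSeries.coeff n (dgen * (PowerSeries.X * h) ^ k)) ∧
      ∀ n : ℕ, 1 ≤ n →
        PowerSeries.coeff (n - 1) h
          = (1 / (n : ℚ)) * PowerSeries.coeff (n - 1) (A ^ n) := by
  have hcoeffh : ∀ l, PowerSeries.coeff l h
      = ∑ k ∈ Finset.range (l + 1), a k * PowerSeries.coeff l ((PowerSeries.X * h) ^ k) := by
    intro l
    conv_lhs => rw [hh]
    simp [psComp, PowerSeries.coeff_mk, hA]
  -- L1
  have L1 : ∀ (g : PowerSeries ℚ) (n : ℕ), PowerSeries.coeff n (g * h)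
      = ∑ j ∈ Finset.range (n + 1),
          a j * PowerSeries.coeff n (g * (PowerSeries.X * h) ^ j) := by
    intro g n
    rw [PowerSeries.coeff_mul]
    have step : ∀ p ∈ Finset.HasAntidiagonal.antidiagonal n,
        PowerSeries.coeff p.1 g * PowerSeries.coeff p.2 h
          = ∑ j ∈ Finset.range (n + 1),
              PowerSeries.coeff p.1 g * (a j * PowerSeries.coeff p.2 ((PowerSeries.X * h) ^ j)) := by
      rintro ⟨i, l⟩ hp
      rw [Finset.HasAntidiagonal.mem_antidiagonal] at hp
      simp only
      rw [hcoeffh l, Finset.mul_sum]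
      apply Finset.sum_subset (Finset.range_subset_range.2 (by omega))
      intro j hj1 hj2
      rw [coeff_Xmul_pow_eq_zero h (by simp only [Finset.mem_range] at hj1 hj2; omega)]
      ring
    rw [Finset.sum_congr rfl step, Finset.sum_comm]
    refine Finset.sum_congr rfl fun j _ => ?_
    rw [PowerSeries.coeff_mul, Finset.mul_sum]
    exact Finset.sum_congr rfl fun p _ => by ring
  -- L2
  have L2 : ∀ (g : PowerSeries ℚ) (n k : ℕ),
      PowerSeries.coeff (n + 1) (g * (PowerSeries.X * h) ^ (k + 1))
        = ∑ j ∈ Finset.range (n + 1),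
            a j * PowerSeries.coeff n (g * (PowerSeries.X * h) ^ (k + j)) := by
    intro g n k
    have e : g * (PowerSeries.X * h) ^ (k + 1)
        = PowerSeries.X * (g * (PowerSeries.X * h) ^ k * h) := by ring
    rw [e, PowerSeries.coeff_succ_X_mul, L1]
    refine Finset.sum_congr rfl fun j _ => ?_
    congr 1
    ring
  -- part 1
  have main : ∀ n k, d n k = PowerSeries.coeff n (dgen * (PowerSeries.X * h) ^ k) := by
    intro n
    induction n with
    | zero =>
      intro k
      cases k with
      | zero => simp [hdgen, PowerSeries.coeff_mk]
      | succ k =>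
        rw [htri 0 (k + 1) (by omega)]
        have hz := coeff_Xmul_pow_eq_zero h (show 0 < k + 1 by omega)
        rw [PowerSeries.coeff_mul]
        simp [hz]
    | succ n ih =>
      intro k
      cases k with
      | zero => simp [hdgen, PowerSeries.coeff_mk]
      | succ k =>
        rw [hrec n k]
        have hsupp : (Function.support fun j => a j * d n (k + j))
            ⊆ ↑(Finset.range (n + 1)) := by
          intro j hj
          simp only [Function.mem_support] at hj
          simp only [Finset.coe_range, Set.mem_Iio]
          by_contra hc
          exact hj (by rw [htri n (k + j) (by omega), mul_zero])
        rw [finsum_eq_sum_of_support_subset _ hsupp, L2]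
        exact Finset.sum_congr rfl fun j _ => by rw [ih (k + j)]
  refine ⟨main, ?_⟩
  -- L2 specialized to g = 1
  have L2' : ∀ (n k : ℕ),
      PowerSeries.coeff (n + 1) ((PowerSeries.X * h) ^ (k + 1))
        = ∑ j ∈ Finset.range (n + 1),
            a j * PowerSeries.coeff n ((PowerSeries.X * h) ^ (k + j)) := by
    intro n k
    have := L2 1 n k
    simpa using this
  -- Lagrange inversion, general statement
  have lag : ∀ n : ℕ, ∀ k ≤ n + 1,
      ((n + 1 : ℕ) : ℚ) * PowerSeries.coeff (n + 1) ((PowerSeries.X * h) ^ k)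
        = (k : ℚ) * PowerSeries.coeff (n + 1 - k) (A ^ (n + 1)) := by
    intro n
    induction n with
    | zero =>
      intro k hk
      interval_cases k
      · simp
      · rw [pow_one, pow_one, PowerSeries.coeff_succ_X_mul, hcoeffh 0]
        simp [hA, PowerSeries.coeff_mk]
    | succ n ih =>
      intro k hk
      cases k with
      | zero => simp
      | succ k =>
        have hk' : k ≤ n + 1 := by omega
        set m := n + 1 - k with hm
        have hkm : k + m = n + 1 := by omega
        have hmQ : (k : ℚ) + (m : ℚ) = (n : ℚ) + 1 := by exact_mod_cast congrArg (Nat.cast : ℕ → ℚ) hkm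
        have e1 : PowerSeries.coeff (n + 2) ((PowerSeries.X * h) ^ (k + 1))
            = ∑ j ∈ Finset.range (m + 1),
                a j * PowerSeries.coeff (n + 1) ((PowerSeries.X * h) ^ (k + j)) := by
          rw [show n + 2 = (n + 1) + 1 from rfl, L2' (n + 1) k]
          symm
          apply Finset.sum_subset (Finset.range_subset_range.2 (by omega))
          intro j hj1 hj2
          rw [coeff_Xmul_pow_eq_zero h
            (by simp only [Finset.mem_range] at hj1 hj2; omega), mul_zero]
        set S := ∑ j ∈ Finset.range (m + 1),
            a j * PowerSeries.coeff (n + 1) ((PowerSeries.X * h) ^ (k + j)) with hS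
        set C := PowerSeries.coeff m (A ^ (n + 2)) with hC
        set Sg2 := ∑ j ∈ Finset.range (m + 1),
            (j : ℚ) * (a j * PowerSeries.coeff (m - j) (A ^ (n + 1))) with hSg2def
        have e4 : (∑ j ∈ Finset.range (m + 1),
            a j * PowerSeries.coeff (m - j) (A ^ (n + 1))) = C := by
          rw [hC, show A ^ (n + 2) = A * A ^ (n + 1) from by ring, hA, coeff_mk_mul]
        have h6 : ((n : ℚ) + 1) * S = (k : ℚ) * C + Sg2 := by
          rw [hS, Finset.mul_sum]
          have term : ∀ j ∈ Finset.range (m + 1),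
              ((n : ℚ) + 1) * (a j * PowerSeries.coeff (n + 1) ((PowerSeries.X * h) ^ (k + j)))
                = (k : ℚ) * (a j * PowerSeries.coeff (m - j) (A ^ (n + 1)))
                  + (j : ℚ) * (a j * PowerSeries.coeff (m - j) (A ^ (n + 1))) := by
            intro j hj
            rw [Finset.mem_range] at hj
            have hkj : k + j ≤ n + 1 := by omega
            have ihj := ih (k + j) hkj
            have hsub : n + 1 - (k + j) = m - j := by omega
            rw [hsub] at ihj
            push_cast at ihj
            have : ((n : ℚ) + 1) * (a j * PowerSeries.coeff (n + 1) ((PowerSeries.X * h) ^ (k + j)))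
                = a j * (((n : ℚ) + 1) * PowerSeries.coeff (n + 1) ((PowerSeries.X * h) ^ (k + j))) := by ring
            rw [this, ihj]
            ring
          rw [Finset.sum_congr rfl term, Finset.sum_add_distrib, ← Finset.mul_sum, e4]
        have hSg2 : ((n : ℚ) + 2) * Sg2 = (m : ℚ) * C := by
          have := deriv_pow_id a (n + 1) m
          rw [← hA] at this
          push_cast at this
          rw [hSg2def, hC]
          linarith [this]
        rw [show n + 1 + 1 = n + 2 from rfl] at *
        rw [show n + 2 - (k + 1) = m from by omega]
        rw [e1, ← hC]
        push_cast
        have hne : ((n : ℚ) + 1) ≠ 0 := by positivity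
        apply mul_left_cancel₀ hne
        linear_combination ((n : ℚ) + 2) * h6 + hSg2 + C * hmQ
  intro n hn
  obtain ⟨m, rfl⟩ : ∃ m, n = m + 1 := ⟨n - 1, by omega⟩
  simp only [Nat.add_sub_cancel]
  have key := lag m 1 (by omega)
  rw [pow_one, PowerSeries.coeff_succ_X_mul, Nat.add_sub_cancel] at key
  push_cast at key
  have hne : ((m : ℚ) + 1) ≠ 0 := by positivity
  field_simp
  push_cast
  linarith [key]
end

section
/- Let d(t), h(t), A(t) be formal power series over ℚ with h(0) ≠ 0, d(0) ≠ 0, A(0) ≠ 0 and h(t) = A(t·h(t)) (so A is the generating function of the A-sequence of the proper Riordan array d_{n,k} = [t^n] d(t)·(t·h(t))^k). Fix integers p ≥ 2 and r ≥ 0 and define d̃_{n,k} = d_{pn+r, (p−1)n+r+k} for n, k ≥ 0. Then {d̃_{n,k}} is a proper Riordan array whose A-sequence has generating function (A(t))^p; that is, writing (A(t))^p = Σ_{k≥0} b_k t^k, one has d̃_{n+1,k+1} = Σ_{j≥0} b_j · d̃_{n,k+j} for all n, k ≥ 0, and consequently there exist formal power series d̃(t), h̃(t) over ℚ with h̃(0)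 ≠ 0, h̃(t) = (A(t·h̃(t)))^p, and d̃_{n,k} = [t^n] d̃(t)·(t·h̃(t))^k for all n, k ≥ 0. -/
open PowerSeries Finset

lemma coeff_psComp (f w : PowerSeries ℚ) (n : ℕ) :
    coeff n (psComp f w) = ∑ k ∈ range (n + 1), coeff k f * coeff n (w ^ k) := by
  simp [psComp]

lemma coeff_wpow_eq_zero {w : PowerSeries ℚ} (hw : (X : PowerSeries ℚ) ∣ w) {m k : ℕ}
    (h : m < k) : coeff m (w ^ k) = 0 :=
  (X_pow_dvd_iff.mp (pow_dvd_pow_of_dvd hw k)) m h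

lemma coeff_eq_of_X_pow_dvd {f g : PowerSeries ℚ} {m : ℕ}
    (h : (X : PowerSeries ℚ) ^ (m + 1) ∣ f - g) : coeff m f = coeff m g := by
  have := X_pow_dvd_iff.mp h m (Nat.lt_succ_self m)
  rw [map_sub] at this
  linarith

/-- `psComp f w` agrees with the truncated substitution up to degree `N`. -/
lemma psComp_sub_sum_dvd (f w : PowerSeries ℚ) (hw : (X : PowerSeries ℚ) ∣ w) (N : ℕ) :
    (X : PowerSeries ℚ) ^ (N + 1) ∣
      psComp f w - ∑ k ∈ range (N + 1), C (coeff k f) * w ^ k := by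
  rw [X_pow_dvd_iff]
  intro m hm
  rw [map_sub, coeff_psComp, map_sum, sub_eq_zero]
  have hsub : range (m + 1) ⊆ range (N + 1) := range_subset_range.mpr (by omega)
  rw [Finset.sum_subset hsub]
  · apply Finset.sum_congr rfl
    intro k _
    rw [coeff_C_mul]
  · intro k hk hk2
    rw [mem_range, not_lt] at hk2
    rw [coeff_wpow_eq_zero hw (by omega), mul_zero]

/-- Workhorse: coefficient of a product with a substituted series. -/
lemma coeff_mul_psComp (B u w : PowerSeries ℚ) (hw : (X : PowerSeries ℚ) ∣ w) (m : ℕ) :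
    coeff m (u * psComp B w) =
      ∑ j ∈ range (m + 1), coeff j B * coeff m (u * w ^ j) := by
  have h1 := psComp_sub_sum_dvd B w hw m
  have h2 : (X : PowerSeries ℚ) ^ (m + 1) ∣
      u * psComp B w - u * ∑ j ∈ range (m + 1), C (coeff j B) * w ^ j := by
    rw [← mul_sub]
    exact Dvd.dvd.mul_left h1 u
  rw [coeff_eq_of_X_pow_dvd h2, Finset.mul_sum, map_sum]
  apply Finset.sum_congr rfl
  intro j _
  rw [show u * (C (coeff j B) * w ^ j) = C (coeff j B) * (u * w ^ j) by ring,
    coeff_C_mul]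

lemma sum_eq_eval₂ (f w : PowerSeries ℚ) (N : ℕ) :
    ∑ k ∈ range N, C (coeff k f) * w ^ k = (trunc N f).eval₂ (C) w :=
  (eval₂_trunc_eq_sum_range _ _ _ _).symm

lemma psComp_mul (f g w : PowerSeries ℚ) (hw : (X : PowerSeries ℚ) ∣ w) :
    psComp (f * g) w = psComp f w * psComp g w := by
  ext n
  apply coeff_eq_of_X_pow_dvd (m := n)
  set N := n + 1
  have hfg := psComp_sub_sum_dvd (f * g) w hw n
  have hf := psComp_sub_sum_dvd f w hw n
  have hg := psComp_sub_sum_dvd g w hw n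
  rw [sum_eq_eval₂] at hfg hf hg
  set E : Polynomial ℚ →+* PowerSeries ℚ := Polynomial.eval₂RingHom (C) w with hE
  have hEdef : ∀ q : Polynomial ℚ, E q = q.eval₂ (C) w := fun q => rfl
  rw [← hEdef] at hfg hf hg
  -- polynomial-level divisibility
  have hpoly : (Polynomial.X : Polynomial ℚ) ^ N ∣
      trunc N (f * g) - trunc N f * trunc N g := by
    rw [Polynomial.X_pow_dvd_iff]
    intro d hd
    have h3 := congrArg (fun q => Polynomial.coeff q d) (trunc_trunc_mul_trunc (n := N) f g)
    simp only [coeff_trunc, if_pos hd] at h3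
    rw [Polynomial.coeff_sub, coeff_trunc, if_pos hd, sub_eq_zero, ← h3,
      ← Polynomial.coeff_coe, Polynomial.coe_mul]
  have hmid : (X : PowerSeries ℚ) ^ N ∣ E (trunc N (f * g)) - E (trunc N f) * E (trunc N g) := by
    rw [← map_mul, ← map_sub]
    obtain ⟨q, hq⟩ := hpoly
    rw [hq, map_mul, map_pow]
    have : E Polynomial.X = w := by simp [hE]
    rw [this]
    exact Dvd.dvd.mul_right (pow_dvd_pow_of_dvd hw N) _
  -- assemble
  have final : (X : PowerSeries ℚ) ^ N ∣ psComp (f * g) w - psComp f w * psComp g w := by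
    have e1 : psComp (f * g) w - psComp f w * psComp g w =
        (psComp (f * g) w - E (trunc N (f * g))) +
        (E (trunc N (f * g)) - E (trunc N f) * E (trunc N g)) +
        (E (trunc N f) - psComp f w) * E (trunc N g) +
        psComp f w * (E (trunc N g) - psComp g w) := by ring
    rw [e1]
    exact dvd_add (dvd_add (dvd_add hfg hmid)
      (Dvd.dvd.mul_right (dvd_sub_comm.mp hf) _)) (Dvd.dvd.mul_left (dvd_sub_comm.mp hg) _)
  exact final

lemma psComp_one (w : PowerSeries ℚ) : psComp 1 w = 1 := by
  ext n
  rw [coeff_psComp]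
  rw [Finset.sum_eq_single 0]
  · simp
  · intro k _ hk
    rw [PowerSeries.coeff_one, if_neg hk, zero_mul]
  · intro h
    exact absurd (mem_range.mpr (Nat.succ_pos n)) h

lemma psComp_pow (f w : PowerSeries ℚ) (hw : (X : PowerSeries ℚ) ∣ w) (p : ℕ) :
    psComp (f ^ p) w = (psComp f w) ^ p := by
  induction p with
  | zero => simpa using psComp_one w
  | succ p ih => rw [pow_succ, pow_succ, psComp_mul _ _ _ hw, ih]

lemma coeff_mul_wpow_zero (u g : PowerSeries ℚ) {m l : ℕ} (h : m < l) :
    coeff m (u * (X * g) ^ l) = 0 := by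
  have hdvd : (X : PowerSeries ℚ) ^ l ∣ u * (X * g) ^ l :=
    Dvd.dvd.mul_left (pow_dvd_pow_of_dvd (dvd_mul_right _ _) l) u
  exact X_pow_dvd_iff.mp hdvd m h

/-- Generic `A`-sequence-power recurrence for Riordan-type coefficient arrays. -/
lemma key_rec (d g B : PowerSeries ℚ) (hg : g = psComp B (X * g)) (q L M : ℕ) :
    coeff (M + q) (d * (X * g) ^ (L + q)) =
      ∑ j ∈ range (M + 1), coeff j (B ^ q) * coeff M (d * (X * g) ^ (L + j)) := by
  have hw : (X : PowerSeries ℚ) ∣ X * g := dvd_mul_right _ _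
  have e1 : d * (X * g) ^ (L + q) = (d * (X * g) ^ L * (psComp B (X * g)) ^ q) * X ^ q := by
    rw [← hg, pow_add]; ring
  rw [e1, coeff_mul_X_pow, ← psComp_pow _ _ hw,
    coeff_mul_psComp _ _ _ hw]
  apply Finset.sum_congr rfl
  intro j _
  rw [pow_add, mul_assoc]

/-- Coefficient `n` of `psComp B (X * f)` only depends on coefficients `< n` of `f`. -/
lemma coeff_psComp_congr (B f g : PowerSeries ℚ) (n : ℕ)
    (h : ∀ i < n, coeff i f = coeff i g) :
    coeff n (psComp B (X * f)) = coeff n (psComp B (X * g)) := by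
  rw [coeff_psComp, coeff_psComp]
  apply Finset.sum_congr rfl
  intro k _
  congr 1
  apply coeff_eq_of_X_pow_dvd
  have h1 : (X : PowerSeries ℚ) ^ (n + 1) ∣ X * f - X * g := by
    rw [← mul_sub, pow_succ, mul_comm ((X : PowerSeries ℚ) ^ n) X]
    apply mul_dvd_mul_left
    rw [X_pow_dvd_iff]
    intro m hm
    rw [map_sub, h m hm, sub_self]
  exact dvd_trans h1 (sub_dvd_pow_sub_pow _ _ k)

noncomputable def fixc (B : PowerSeries ℚ) (n : ℕ) : ℚ :=
  PowerSeries.coeff n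
    (psComp B (PowerSeries.X * PowerSeries.mk fun i => if h : i < n then fixc B i else 0))
termination_by n
decreasing_by exact h

lemma fixed_point (B : PowerSeries ℚ) :
    PowerSeries.mk (fixc B) = psComp B (X * PowerSeries.mk (fixc B)) := by
  ext n
  rw [coeff_mk, fixc]
  apply coeff_psComp_congr
  intro i hi
  rw [coeff_mk, coeff_mk, dif_pos hi]

lemma fixed_const (B : PowerSeries ℚ) :
    constantCoeff (PowerSeries.mk (fixc B)) = constantCoeff B := by
  rw [← coeff_zero_eq_constantCoeff_apply, ← coeff_zero_eq_constantCoeff_apply, fixed_point B,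
    coeff_psComp]
  simp

/-- Extracting rows from a proper Riordan array: if `d_{n,k} = [t^n] d(t)·(t·h(t))^k` is a
proper Riordan array with `A`-sequence generating function `A(t)` (i.e. `h(t) = A(t·h(t))`),
then for `p ≥ 2`, `r ≥ 0`, the array `d̃_{n,k} = d_{pn+r,(p−1)n+r+k}` satisfies the
recurrence given by the coefficients of `A(t)^p`, and it is a proper Riordan array whose
`h`-function satisfies `h̃(t) = A(t·h̃(t))^p`. -/
theorem riordan_array_extraction (d h A : PowerSeries ℚ)
    (hh0 : PowerSeries.constantCoeff h ≠ 0)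
    (hd0 : PowerSeries.constantCoeff d ≠ 0)
    (hA0 : PowerSeries.constantCoeff A ≠ 0)
    (hhA : h = psComp A (PowerSeries.X * h))
    (p r : ℕ) (hp : 2 ≤ p)
    (dt : ℕ → ℕ → ℚ)
    (hdt : ∀ n k, dt n k =
      PowerSeries.coeff (p * n + r)
        (d * (PowerSeries.X * h) ^ ((p - 1) * n + r + k))) :
    (∀ n k, dt (n + 1) (k + 1) = ∑ᶠ j : ℕ, PowerSeries.coeff j (A ^ p) * dt n (k + j)) ∧
      ∃ dts hts : PowerSeries ℚ, PowerSeries.constantCoeff hts ≠ 0 ∧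
        hts = (psComp A (PowerSeries.X * hts)) ^ p ∧
        ∀ n k, dt n k = PowerSeries.coeff n (dts * (PowerSeries.X * hts) ^ k) := by
  obtain ⟨q, rfl⟩ : ∃ q, p = q + 2 := ⟨p - 2, by omega⟩
  have hq1 : q + 2 - 1 = q + 1 := by omega
  -- zero coefficients above the "diagonal"
  have hdtz : ∀ n k, n < k → dt n k = 0 := by
    intro n k hk
    rw [hdt]
    apply coeff_mul_wpow_zero
    rw [hq1]
    have h2 : (q + 2) * n = (q + 1) * n + n := by ring
    rw [h2]
    generalize (q + 1) * n = a
    omega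
  -- finite-sum recurrence for dt
  have hrec : ∀ n k, dt (n + 1) (k + 1) =
      ∑ j ∈ range ((q + 2) * n + r + 1), coeff j (A ^ (q + 2)) * dt n (k + j) := by
    intro n k
    have e1 : dt (n + 1) (k + 1) = coeff (((q + 2) * n + r) + (q + 2))
        (d * (X * h) ^ (((q + 1) * n + r + k) + (q + 2))) := by
      rw [hdt]
      congr 2
      · ring
      · rw [hq1]; ring
    rw [e1, key_rec d h A hhA (q + 2) _ _]
    apply Finset.sum_congr rfl
    intro j _
    rw [hdt n (k + j), hq1]
    congr 3
    ring
  have hn_le : ∀ n : ℕ, n ≤ (q + 2) * n + r := by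
    intro n
    have : n ≤ (q + 2) * n := Nat.le_mul_of_pos_left n (by omega)
    omega
  constructor
  · -- part 1 : the finsum recurrence
    intro n k
    rw [hrec n k]
    refine (finsum_eq_sum_of_support_subset _ ?_).symm
    intro j hj
    simp only [Function.mem_support, Finset.coe_range, Set.mem_Iio] at hj ⊢
    by_contra hcon
    push_neg at hcon
    apply hj
    rw [hdtz n (k + j) (by have := hn_le n; omega), mul_zero]
  · -- part 2 : construction of the Riordan array
    set B := A ^ (q + 2) with hB
    refine ⟨PowerSeries.mk (fun n => dt n 0), PowerSeries.mk (fixc B), ?_, ?_, ?_⟩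
    · rw [fixed_const B, hB, map_pow]
      exact pow_ne_zero _ hA0
    · rw [← psComp_pow _ _ (dvd_mul_right _ _), ← hB]
      exact fixed_point B
    · set hts := PowerSeries.mk (fixc B) with hhts
      set dts := PowerSeries.mk (fun n => dt n 0) with hdts
      have hfix : hts = psComp B (X * hts) := fixed_point B
      have herec : ∀ n k, coeff (n + 1) (dts * (X * hts) ^ (k + 1)) =
          ∑ j ∈ range (n + 1), coeff j B * coeff n (dts * (X * hts) ^ (k + j)) := by
        intro n k
        have := key_rec dts hts B hfix 1 k n
        simpa using this
      intro n
      induction n with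
      | zero =>
        intro k
        cases k with
        | zero => simp [hdts]
        | succ k =>
          rw [hdtz 0 (k + 1) (Nat.succ_pos k), coeff_mul_wpow_zero _ _ (Nat.succ_pos k)]
      | succ n ih =>
        intro k
        cases k with
        | zero => simp [hdts]
        | succ k =>
          rw [hrec n k, herec n k]
          rw [Finset.sum_subset (range_subset_range.mpr (by have := hn_le n; omega) :
            range (n + 1) ⊆ range ((q + 2) * n + r + 1))]
          · apply Finset.sum_congr rfl
            intro j _
            rw [ih (k + j)]
          · intro j hj hj2
            rw [mem_range, not_lt] at hj2
            rw [coeff_mul_wpow_zero _ _ (by omega), mul_zero]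
end

section
/- Fix an integer q ≥ 2 and let B_q(t) be the unique formal power series over ℚ satisfying B_q(t) = 1 + t·(B_q(t))^q (the generalized binomial series). Then for every integer r ≥ 1, (B_q(t))^r = Σ_{n≥0} ( r/(qn+r) )·C(qn+r, n)·t^n. -/
open PowerSeries Finset

/-- For `q ≥ 2` and the generalized binomial series `B_q(t)`, the unique formal power
series satisfying `B_q(t) = 1 + t·B_q(t)^q`, one has
`(B_q(t))^r = Σ_{n≥0} (r/(qn+r))·C(qn+r, n)·t^n` for every integer `r ≥ 1`. -/
theorem coeff_pow_generalized_binomial_series (q : ℕ) (hq : 2 ≤ q) (B : PowerSeries ℚ)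
    (hB : B = 1 + PowerSeries.X * B ^ q) (r : ℕ) (hr : 1 ≤ r) (n : ℕ) :
    PowerSeries.coeff n (B ^ r)
      = ((r : ℚ) / ((q : ℚ) * n + r)) * ((q * n + r).choose n : ℚ) := by
  induction n using Nat.strong_induction_on generalizing r with
  | _ n ih =>
  rcases Nat.eq_zero_or_pos n with hn | hn
  · subst hn
    have hB0 : PowerSeries.constantCoeff B = 1 := by
      have := congrArg (PowerSeries.constantCoeff) hB
      simpa using this
    have : PowerSeries.coeff 0 (B ^ r) = 1 := by
      rw [PowerSeries.coeff_zero_eq_constantCoeff, map_pow, hB0, one_pow]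
    rw [this]
    have hr' : (r : ℚ) ≠ 0 := by positivity
    simp [hr']
  · -- n ≥ 1
    have hq0 : (q : ℚ) ≠ 0 := by positivity
    have hn0 : (n : ℚ) ≠ 0 := by positivity
    have key : PowerSeries.coeff n (B ^ r)
        = ∑ k ∈ Finset.range (r + 1),
            (r.choose k : ℚ) *
              (if k ≤ n then PowerSeries.coeff (n - k) (B ^ (q * k)) else 0) := by
      conv_lhs => rw [hB, add_comm, add_pow]
      rw [map_sum]
      refine Finset.sum_congr rfl fun k _ => ?_
      rw [one_pow, mul_one, mul_pow, ← pow_mul]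
      have : PowerSeries.X (R := ℚ) ^ k * B ^ (q * k) * (r.choose k : PowerSeries ℚ)
          = (PowerSeries.C ((r.choose k : ℚ))) * (PowerSeries.X ^ k * B ^ (q * k)) := by
        rw [map_natCast]; ring
      rw [this, PowerSeries.coeff_C_mul, PowerSeries.coeff_X_pow_mul']
    -- F k : value of the k-th term after applying ih
    set F : ℕ → ℚ := fun k =>
      if 1 ≤ k ∧ k ≤ n then
        (r.choose k : ℚ) * ((k : ℚ) / n) * ((q * n).choose (n - k) : ℚ)
      else 0 with hF
    have key2 : PowerSeries.coeff n (B ^ r) = ∑ k ∈ Finset.range (r + 1), F k := by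
      rw [key]
      refine Finset.sum_congr rfl fun k _ => ?_
      rcases Nat.eq_zero_or_pos k with hk0 | hk1
      · subst hk0
        simp [hF, PowerSeries.coeff_one, hn.ne']
      by_cases hkn : k ≤ n
      · have hlt : n - k < n := by omega
        have hqk : 1 ≤ q * k := by nlinarith
        rw [ih (n - k) hlt (q * k) hqk]
        have hnat : q * (n - k) + q * k = q * n := by
          rw [← Nat.mul_add, Nat.sub_add_cancel hkn]
        have hcast : (q : ℚ) * ((n : ℚ) - (k : ℚ)) + ((q * k : ℕ) : ℚ) = (q : ℚ) * n := by
          push_cast; ring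
        rw [if_pos hkn]
        simp only [hF]
        rw [if_pos (show 1 ≤ k ∧ k ≤ n from ⟨hk1, hkn⟩), hnat, Nat.cast_sub hkn, hcast]
        have : ((q * k : ℕ) : ℚ) / ((q : ℚ) * n) = (k : ℚ) / n := by
          push_cast
          rw [mul_div_mul_left _ _ hq0]
        rw [this]; ring
      · rw [if_neg hkn]
        simp only [hF]
        rw [if_neg (fun h => hkn h.2), mul_zero]
    -- extend the sum to range (n + r + 1)
    have key3 : ∑ k ∈ Finset.range (r + 1), F k = ∑ k ∈ Finset.range (n + r + 1), F k := by
      refine Finset.sum_subset (Finset.range_subset_range.2 (by omega)) fun k _ hk => ?_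
      have hk' : r < k := by simpa using Nat.lt_of_succ_le (Nat.not_lt.1 (by simpa using hk))
      simp only [hF]
      by_cases h : 1 ≤ k ∧ k ≤ n
      · rw [if_pos h, Nat.choose_eq_zero_of_lt hk']
        simp
      · rw [if_neg h]
    -- shift index
    have key4 : ∑ k ∈ Finset.range (n + r + 1), F k
        = ∑ j ∈ Finset.range (n + r), F (j + 1) := by
      rw [Finset.sum_range_succ']
      have : F 0 = 0 := by simp [hF]
      rw [this, add_zero]
    -- rewrite each shifted term
    have hterm : ∀ j, F (j + 1)
        = (r : ℚ) / n * (if j < n then ((r - 1).choose j : ℚ) * ((q * n).choose (n - 1 - j) : ℚ) else 0) := by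
      intro j
      by_cases hj : j < n
      · have h1 : 1 ≤ j + 1 ∧ j + 1 ≤ n := ⟨by omega, by omega⟩
        simp only [hF]
        rw [if_pos h1, if_pos hj]
        have hnat : r * (r - 1).choose j = r.choose (j + 1) * (j + 1) := by
          have := Nat.add_one_mul_choose_eq (r - 1) j
          rwa [Nat.sub_add_cancel hr] at this
        have hcast : (r : ℚ) * ((r - 1).choose j : ℚ) = (r.choose (j + 1) : ℚ) * ((j : ℚ) + 1) := by
          exact_mod_cast congrArg (Nat.cast (R := ℚ)) hnat
        have hsub : n - (j + 1) = n - 1 - j := by omega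
        rw [hsub]
        push_cast
        field_simp
        nlinarith [hcast]
      · have h1 : ¬(1 ≤ j + 1 ∧ j + 1 ≤ n) := by omega
        simp only [hF]
        rw [if_neg h1, if_neg hj, mul_zero]
    have key5 : ∑ j ∈ Finset.range (n + r), F (j + 1)
        = (r : ℚ) / n * ∑ j ∈ Finset.range n, ((r - 1).choose j : ℚ) * ((q * n).choose (n - 1 - j) : ℚ) := by
      have h1 : ∑ j ∈ Finset.range (n + r), F (j + 1)
          = ∑ j ∈ Finset.range (n + r),
              (r : ℚ) / n * (if j < n then ((r - 1).choose j : ℚ) * ((q * n).choose (n - 1 - j) : ℚ) else 0) :=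
        Finset.sum_congr rfl fun j _ => hterm j
      rw [h1, ← Finset.mul_sum]
      congr 1
      rw [← Finset.sum_subset (Finset.range_subset_range.2 (show n ≤ n + r by omega))
        (fun j _ hj => if_neg (by simpa using hj))]
      exact Finset.sum_congr rfl fun j hj => if_pos (Finset.mem_range.1 hj)
    -- Vandermonde
    have hvan : ∑ j ∈ Finset.range n, ((r - 1).choose j : ℚ) * ((q * n).choose (n - 1 - j) : ℚ)
        = (((r - 1) + q * n).choose (n - 1) : ℚ) := by
      have h := Nat.add_choose_eq (r - 1) (q * n) (n - 1)
      rw [Finset.Nat.sum_antidiagonal_eq_sum_range_succ_mk, Nat.succ_eq_add_one,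
          show n - 1 + 1 = n from by omega] at h
      rw [h]
      push_cast
      exact Finset.sum_congr rfl fun k _ => rfl
    -- final arithmetic
    have hfin : (r : ℚ) / n * (((r - 1) + q * n).choose (n - 1) : ℚ)
        = ((r : ℚ) / ((q : ℚ) * n + r)) * ((q * n + r).choose n : ℚ) := by
      have hnat : (q * n + r) * ((r - 1) + q * n).choose (n - 1) = (q * n + r).choose n * n := by
        have h2 := Nat.add_one_mul_choose_eq (q * n + r - 1) (n - 1)
        rw [show q * n + r - 1 + 1 = q * n + r from by omega,
            show n - 1 + 1 = n from by omega,
            show q * n + r - 1 = (r - 1) + q * n from by omega] at h2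
        exact h2
      have hcast : ((q : ℚ) * n + r) * (((r - 1) + q * n).choose (n - 1) : ℚ)
          = ((q * n + r).choose n : ℚ) * n := by
        have := congrArg (Nat.cast (R := ℚ)) hnat
        push_cast at this ⊢
        linarith [this]
      have hd : (q : ℚ) * n + r ≠ 0 := by positivity
      field_simp
      nlinarith [hcast]
    rw [key2, key3, key4, key5, hvan, hfin]
end

section
/- For all integers p ≥ 2, r ≥ 0 and n ≥ k ≥ s ≥ 1, the following identity holds in ℚ: Σ_{j=s}^{n} [ ps/((p−1)j + s) ]·C(pj−1, j−s)·C(p(n−j)+r, n−j−k+s) = C(pn+r, n−k). -/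
namespace PEI

/-- `B(y,b) = C(y + p b, b)` -/
def Bc (p y b : ℕ) : ℚ := ((y + p * b).choose b : ℚ)

/-- `A(x,a) = C(x+pa, a) - p C(x+pa-1, a-1)`, which equals `x/(x+pa) C(x+pa,a)`. -/
def Ac (p x a : ℕ) : ℚ :=
  Bc p x a - p * (if a = 0 then 0 else ((x + p * a - 1).choose (a - 1) : ℚ))

lemma Bc_zero (p y : ℕ) : Bc p y 0 = 1 := by simp [Bc]

lemma Ac_zero (p x : ℕ) : Ac p x 0 = 1 := by simp [Ac, Bc]

lemma Ac_succ (p x a : ℕ) :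
    Ac p x (a+1) = ((x + p * (a+1)).choose (a+1) : ℚ)
      - p * ((x + p * (a+1) - 1).choose a : ℚ) := by
  simp [Ac, Bc]

lemma choose_mul_eq (p a x : ℕ) (hx : 1 ≤ x + p * (a+1)) :
    (x + p*(a+1)) * (x + p*(a+1) - 1).choose a = (x + p*(a+1)).choose (a+1) * (a+1) := by
  obtain ⟨n, hn⟩ : ∃ n, x + p*(a+1) = n + 1 := ⟨x + p*(a+1) - 1, by omega⟩
  rw [hn]
  simpa using Nat.add_one_mul_choose_eq n a

lemma Ac_zero_left (p a : ℕ) (hp : 1 ≤ p) : Ac p 0 (a+1) = 0 := by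
  have h := choose_mul_eq p a 0 (by nlinarith)
  rw [Ac_succ]
  have hq : ((0 + p*(a+1) : ℕ) : ℚ) * ((0 + p*(a+1) - 1).choose a : ℚ)
      = ((0 + p*(a+1)).choose (a+1) : ℚ) * ((a:ℚ)+1) := by
    exact_mod_cast congrArg (Nat.cast : ℕ → ℚ) h
  have hc : ((a:ℚ)+1) ≠ 0 := by positivity
  have hcast : ((0 + p*(a+1) : ℕ) : ℚ) = (p:ℚ) * ((a:ℚ)+1) := by push_cast; ring
  rw [hcast] at hq
  field_simp at hq ⊢
  nlinarith [hq]

lemma Ac_div (p x a : ℕ) (hx : 1 ≤ x) :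
    Ac p x a = (x : ℚ) / ((x : ℚ) + p * a) * ((x + p * a).choose a : ℚ) := by
  rcases a with _ | a
  · have : ((x:ℚ) + p * 0) ≠ 0 := by push_cast; positivity
    rw [Ac_zero]
    field_simp
    simp
  · have h := choose_mul_eq p a x (by omega)
    have hq : ((x:ℚ) + p*(a+1)) * ((x + p*(a+1) - 1).choose a : ℚ)
        = ((x + p*(a+1)).choose (a+1) : ℚ) * ((a:ℚ)+1) := by
      have := congrArg (Nat.cast : ℕ → ℚ) h
      push_cast at this
      linarith [this]
    have hne : ((x:ℚ) + p*(a+1)) ≠ 0 := by positivity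
    rw [Ac_succ]
    have : ((x:ℚ) + p * (a+1 : ℕ)) = (x:ℚ) + p*((a:ℚ)+1) := by push_cast; ring
    rw [this]
    field_simp
    linear_combination (-(p:ℚ)) * hq

lemma Bc_pascal (p y b : ℕ) :
    Bc p (y+1) (b+1) = Bc p y (b+1) + Bc p (y+p) b := by
  unfold Bc
  have h1 : y+1 + p*(b+1) = (y + p*(b+1)) + 1 := by omega
  have h2 : y + p + p*b = y + p*(b+1) := by ring
  rw [h1, h2, Nat.choose_succ_succ]
  push_cast; ring

lemma Ac_pascal (p x a : ℕ) (hp : 1 ≤ p) :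
    Ac p (x+1) (a+1) = Ac p x (a+1) + Ac p (x+p) a := by
  rcases a with _ | b
  · rw [Ac_succ, Ac_succ, Ac_zero]
    norm_num [Nat.choose_one_right]
  · have hpos : 1 ≤ p * (b+1+1) := by
      have := Nat.mul_le_mul hp (show 1 ≤ b+1+1 by omega)
      omega
    obtain ⟨N, hN⟩ : ∃ N, x + p*(b+1+1) = N + 1 := ⟨x + p*(b+1+1) - 1, by omega⟩
    rw [Ac_succ, Ac_succ, Ac_succ]
    have e2 : x + 1 + p*(b+1+1) - 1 = N + 1 := by omega
    have e4 : x + p*(b+1+1) - 1 = N := by omega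
    have e6 : x + p + p*(b+1) - 1 = N := by
      have hmul : p*(b+1+1) = p*(b+1) + p := by ring
      omega
    rw [e2, e4, e6]
    have e1 : x + 1 + p*(b+1+1) = N + 2 := by omega
    have e3 : x + p*(b+1+1) = N + 1 := by omega
    have e5 : x + p + p*(b+1) = N + 1 := by
      have hmul : p*(b+1+1) = p*(b+1) + p := by ring
      omega
    rw [e1, e3, e5]
    have p1 : (N+2).choose (b+2) = (N+1).choose (b+1) + (N+1).choose (b+2) :=
      Nat.choose_succ_succ (N+1) (b+1)
    have p2 : (N+1).choose (b+1) = N.choose b + N.choose (b+1) :=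
      Nat.choose_succ_succ N b
    rw [p1, p2]
    push_cast; ring

lemma hr2 (p : ℕ) (hp : 1 ≤ p) :
    ∀ M x y : ℕ, ∑ a ∈ Finset.range (M+1), Ac p x a * Ac p y (M - a) = Ac p (x + y) M := by
  intro M
  induction M using Nat.strong_induction_on with
  | _ M ih =>
    rcases M with _ | N
    · intro x y; simp [Ac_zero]
    · intro x y
      induction x with
      | zero =>
        rw [Finset.sum_eq_single 0]
        · simp [Ac_zero]
        · intro b hb hb0
          obtain ⟨c, rfl⟩ := Nat.exists_eq_succ_of_ne_zero hb0
          rw [Ac_zero_left p c hp]; ring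
        · intro h; simp at h
      | succ x ihx =>
        rw [Finset.sum_range_succ']
        have key : ∀ a ∈ Finset.range (N+1),
            Ac p (x+1) (a+1) * Ac p y (N+1 - (a+1))
              = Ac p x (a+1) * Ac p y (N+1-(a+1)) + Ac p (x+p) a * Ac p y (N - a) := by
          intro a ha
          have : N + 1 - (a+1) = N - a := by omega
          rw [this, Ac_pascal p x a hp]; ring
        rw [Finset.sum_congr rfl key, Finset.sum_add_distrib]
        have h1 : ∑ a ∈ Finset.range (N+1), Ac p x (a+1) * Ac p y (N+1-(a+1))
              + Ac p (x+1) 0 * Ac p y (N+1-0)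
            = ∑ a ∈ Finset.range (N+2), Ac p x a * Ac p y (N+1-a) := by
          conv_rhs => rw [Finset.sum_range_succ']
          simp only [Ac_zero, one_mul]
        have h2 : ∑ a ∈ Finset.range (N+1), Ac p (x+p) a * Ac p y (N - a)
            = Ac p (x+p+y) N := ih N (by omega) (x+p) y
        have h3 : ∑ a ∈ Finset.range (N+2), Ac p x a * Ac p y (N+1-a)
            = Ac p (x+y) (N+1) := ihx
        calc ∑ a ∈ Finset.range (N+1), Ac p x (a+1) * Ac p y (N+1-(a+1))
              + ∑ a ∈ Finset.range (N+1), Ac p (x+p) a * Ac p y (N - a)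
              + Ac p (x+1) 0 * Ac p y (N+1-0)
            = (∑ a ∈ Finset.range (N+1), Ac p x (a+1) * Ac p y (N+1-(a+1))
              + Ac p (x+1) 0 * Ac p y (N+1-0)) + Ac p (x+p+y) N := by rw [h2]; ring
          _ = Ac p (x+y) (N+1) + Ac p ((x+y)+p) N := by
              rw [h1, h3]
              have : x+p+y = x+y+p := by ring
              rw [this]
          _ = Ac p (x+1+y) (N+1) := by
              have : x+1+y = (x+y)+1 := by ring
              rw [this, Ac_pascal p (x+y) N hp]

lemma Ac_eq_Bc_sub (p q y c : ℕ) (hp : p = q+1) :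
    Ac p y (c+1) = Bc p y (c+1) - p * Bc p (y+q) c := by
  rw [Ac_succ]
  unfold Bc
  have hmul : p*(c+1) = p*c + p := by ring
  have h1 : y + q + p*c = y + p*(c+1) - 1 := by omega
  rw [h1]

lemma hr1 (p : ℕ) (hp : 1 ≤ p) :
    ∀ M x y : ℕ, ∑ a ∈ Finset.range (M+1), Ac p x a * Bc p y (M - a) = Bc p (x + y) M := by
  obtain ⟨q, rfl⟩ : ∃ q, p = q + 1 := ⟨p - 1, by omega⟩
  set p := q + 1 with hpq
  intro M
  induction M with
  | zero => intro x y; simp [Ac_zero, Bc_zero]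
  | succ N ih =>
    intro x y
    have key : ∀ a ∈ Finset.range (N+1),
        Ac p x a * Bc p y (N+1-a)
          = Ac p x a * Ac p y (N+1-a) + p * (Ac p x a * Bc p (y+q) (N-a)) := by
      intro a ha
      have hle : a ≤ N := by simpa using Finset.mem_range_succ_iff.mp ha
      have h1 : N + 1 - a = (N - a) + 1 := by omega
      rw [h1, Ac_eq_Bc_sub p q y (N-a) rfl]
      ring
    rw [Finset.sum_range_succ, Finset.sum_congr rfl key, Finset.sum_add_distrib,
      ← Finset.mul_sum, ih x (y+q)]
    have h2 : ∑ a ∈ Finset.range (N+1), Ac p x a * Ac p y (N+1-a)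
          + Ac p x (N+1) * Bc p y (N+1-(N+1))
        = ∑ a ∈ Finset.range (N+2), Ac p x a * Ac p y (N+1-a) := by
      conv_rhs => rw [Finset.sum_range_succ]
      simp only [Nat.sub_self, Ac_zero, Bc_zero, mul_one]
    calc ∑ a ∈ Finset.range (N+1), Ac p x a * Ac p y (N+1-a) + p * Bc p (x+(y+q)) N
          + Ac p x (N+1) * Bc p y (N+1-(N+1))
        = (∑ a ∈ Finset.range (N+1), Ac p x a * Ac p y (N+1-a)
            + Ac p x (N+1) * Bc p y (N+1-(N+1))) + p * Bc p (x+y+q) N := by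
          have : x+(y+q) = x+y+q := by ring
          rw [this]; ring
      _ = Ac p (x+y) (N+1) + p * Bc p (x+y+q) N := by
          rw [h2, hr2 p (by omega) (N+1) x y]
      _ = Bc p (x+y) (N+1) := by
          rw [Ac_eq_Bc_sub p q (x+y) N rfl]; ring

end PEI

open PEI in
/-- For `p ≥ 2`, `r ≥ 0`, `n ≥ k ≥ s ≥ 1`:
`Σ_{j=s}^{n} (ps/((p−1)j+s))·C(pj−1, j−s)·C(p(n−j)+r, n−j−k+s) = C(pn+r, n−k)`. -/
theorem pascal_extraction_identity (p r n k s : ℕ)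
    (hp : 2 ≤ p) (hs : 1 ≤ s) (hsk : s ≤ k) (hkn : k ≤ n) :
    ∑ j ∈ Finset.Icc s n,
        ((p : ℚ) * s / (((p : ℚ) - 1) * j + s)) * ((p * j - 1).choose (j - s) : ℚ)
          * ichoose (p * (n - j) + r) ((n : ℤ) - j - k + s)
      = ((p * n + r).choose (n - k) : ℚ) := by
  set m := n - s with hm
  set t := k - s with ht
  set M := n - k with hM
  -- reindex the sum
  rw [← Finset.Ico_add_one_right_eq_Icc, Finset.sum_Ico_eq_sum_range]
  have hrange : n + 1 - s = m + 1 := by omega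
  rw [hrange]
  have term_eq : ∀ i ∈ Finset.range (m+1),
      ((p : ℚ) * s / (((p : ℚ) - 1) * ((s+i : ℕ) : ℚ) + s)) * ((p * (s+i) - 1).choose ((s+i) - s) : ℚ)
        * ichoose (p * (n - (s+i)) + r) ((n : ℤ) - ((s+i : ℕ) : ℤ) - k + s)
      = Ac p (p*s) i * (if i ≤ M then Bc p (p*t+r) (M - i) else 0) := by
    intro i hi
    have him : i ≤ m := by simpa using Finset.mem_range_succ_iff.mp hi
    -- coefficient part
    have hps : 1 ≤ p * s := by nlinarith
    have hco : ((p : ℚ) * s / (((p : ℚ) - 1) * ((s+i : ℕ) : ℚ) + s)) * ((p * (s+i) - 1).choose ((s+i) - s) : ℚ)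
        = Ac p (p*s) i := by
      have hsub : (s+i) - s = i := by omega
      rw [hsub]
      have hN : 1 ≤ p*s + p*i := by omega
      have harg : p * (s+i) - 1 = p*s + p*i - 1 := by rw [Nat.mul_add]
      rw [harg]
      have hid : (p*s + p*i - 1).choose i * (p*s+p*i) = (p*s+p*i).choose i * (p*s+p*i - i) := by
        obtain ⟨N, hNe⟩ : ∃ N, p*s+p*i = N+1 := ⟨p*s+p*i-1, by omega⟩
        rw [hNe]
        simpa using Nat.choose_mul_succ_eq N i
      have hiN : i ≤ p*s + p*i := by nlinarith
      have hqid : ((p*s + p*i - 1).choose i : ℚ) * ((p:ℚ)*s + p*i)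
          = ((p*s+p*i).choose i : ℚ) * ((p:ℚ)*s + p*i - i) := by
        have := congrArg (Nat.cast : ℕ → ℚ) hid
        push_cast [Nat.cast_sub hiN] at this
        linarith [this]
      have hd1 : ((p : ℚ) - 1) * ((s:ℚ)+i) + s = (p:ℚ)*s + p*i - i := by ring
      have hd1ne : ((p : ℚ) - 1) * ((s:ℚ)+i) + s ≠ 0 := by
        rw [hd1]
        have h1 : (i:ℚ) ≤ (p:ℚ)*i := by
          have : (1:ℚ) ≤ p := by exact_mod_cast (by omega : 1 ≤ p)
          nlinarith [Nat.cast_nonneg (α := ℚ) i]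
        have h2 : (1:ℚ) ≤ (p:ℚ)*s := by exact_mod_cast hps
        nlinarith
      have hd2ne : ((p:ℚ)*s + p*i) ≠ 0 := by
        have h2 : (1:ℚ) ≤ (p:ℚ)*s := by exact_mod_cast hps
        have : (0:ℚ) ≤ (p:ℚ)*i := by positivity
        nlinarith
      rw [Ac_div p (p*s) i hps]
      have hcast : ((p*s : ℕ):ℚ) = (p:ℚ)*s := by push_cast; ring
      have hcast2 : ((p*s : ℕ):ℚ) + (p:ℚ)*i = (p:ℚ)*s + (p:ℚ)*i := by rw [hcast]
      have hargQ : p*s + p*(i:ℕ) = p*s + p*i := rfl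
      push_cast
      rw [hd1] at *
      rw [div_mul_eq_mul_div, div_mul_eq_mul_div, div_eq_div_iff hd1ne hd2ne]
      linear_combination ((p:ℚ)*s) * hqid
    rw [hco]
    -- ichoose part
    have hix : ((n : ℤ) - ((s+i : ℕ) : ℤ) - k + s) = (M : ℤ) - i := by
      push_cast; omega
    rw [hix]
    by_cases hiM : i ≤ M
    · rw [if_pos hiM]
      have hnonneg : ¬ ((M:ℤ) - i < 0) := by omega
      rw [ichoose, if_neg hnonneg]
      have htn : ((M:ℤ) - i).toNat = M - i := by omega
      rw [htn]
      have harg : p * (n - (s+i)) + r = (p*t + r) + p*(M-i) := by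
        have h1 : n - (s+i) = t + (M-i) := by omega
        rw [h1, Nat.mul_add]; omega
      rw [harg]
      rfl
    · rw [if_neg hiM]
      have hneg : ((M:ℤ) - i < 0) := by omega
      rw [ichoose, if_pos hneg]
  rw [Finset.sum_congr rfl term_eq]
  have hMm : M + 1 ≤ m + 1 := by omega
  rw [← Finset.sum_subset (Finset.range_subset_range.2 hMm) (by
    intro x hx hnx
    have : ¬ x ≤ M := by
      simp only [Finset.mem_range] at hx hnx; omega
    rw [if_neg this, mul_zero])]
  have hfin : ∑ i ∈ Finset.range (M+1),
      Ac p (p*s) i * (if i ≤ M then Bc p (p*t+r) (M - i) else 0)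
      = ∑ i ∈ Finset.range (M+1), Ac p (p*s) i * Bc p (p*t+r) (M - i) := by
    apply Finset.sum_congr rfl
    intro i hi
    rw [if_pos (by simpa using Finset.mem_range_succ_iff.mp hi)]
  rw [hfin, hr1 p (by omega) M (p*s) (p*t+r)]
  unfold Bc
  have hfin2 : p*s + (p*t+r) + p*M = p*n + r := by
    have hstM : s + t + M = n := by omega
    calc p*s + (p*t+r) + p*M = p*(s+t+M) + r := by ring
    _ = p*n + r := by rw [hstM]
  rw [hfin2]
end

section
/- For all integers p ≥ 2, r ≥ 0 and n ≥ k ≥ 1, the following identity holds in ℚ: Σ_{j=0}^{n} [ 1/(pj+1) ]·C(pj+1, j)·C(p(n−j)+r, n−j−k+1) = C(pn+r+1, n−k+1). -/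
namespace CatConv
open Finset

/-- Weighted generalized Catalan numbers: `c/(pm+c)·C(pm+c,m)`,
the coefficients of `B(x)^c` where `B = 1 + x·B^p`. -/
def V (p c m : ℕ) : ℚ :=
  if m = 0 then 1 else (c : ℚ) / ((p : ℚ) * m + c) * (((p * m + c).choose m : ℕ) : ℚ)

def U (p c m : ℕ) : ℚ := (((p * m + c).choose m : ℕ) : ℚ)

lemma V_zero_right (p c : ℕ) : V p c 0 = 1 := by simp [V]

lemma U_zero_right (p c : ℕ) : U p c 0 = 1 := by simp [U]

lemma V_zero_left (p m : ℕ) (hm : m ≠ 0) : V p 0 m = 0 := by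
  simp [V, hm]

lemma V_formula (p c m : ℕ) (h : p * m + c ≠ 0) :
    V p c m = (c : ℚ) / ((p : ℚ) * m + c) * (((p * m + c).choose m : ℕ) : ℚ) := by
  rcases Nat.eq_zero_or_pos m with rfl | hm
  · have hc : c ≠ 0 := by simpa using h
    simp [V, div_self (show (c:ℚ) ≠ 0 by exact_mod_cast hc)]
  · rw [V, if_neg hm.ne']

lemma absorb (N s : ℕ) (hs : s ≤ N) :
    ((s : ℚ) + 1) * (N.choose (s + 1)) = ((N : ℚ) - s) * (N.choose s) := by
  have h : ((N.choose (s + 1) * (s + 1) : ℕ) : ℚ) = ((N.choose s * (N - s) : ℕ) : ℚ) := by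
    rw [Nat.choose_succ_right_eq]
  push_cast [Nat.cast_sub hs] at h
  linarith

/-- The Pascal-type recurrence for the weighted numbers. -/
lemma V_rec (p c m : ℕ) (hp : 1 ≤ p) :
    V p (c + 1) (m + 1) = V p c (m + 1) + V p (c + p) m := by
  have hmul : p * (m + 1) = p * m + p := by ring
  have hm1 : 1 * m ≤ p * m := Nat.mul_le_mul_right m hp
  have hN1 : p * (m + 1) + (c + 1) ≠ 0 := by omega
  have hN2 : p * (m + 1) + c ≠ 0 := by omega
  have hN3 : p * m + (c + p) ≠ 0 := by omega
  rw [V_formula _ _ _ hN1, V_formula _ _ _ hN2, V_formula _ _ _ hN3]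
  have k1 : p * (m + 1) + (c + 1) = (p * m + p + c) + 1 := by ring
  have k2 : p * (m + 1) + c = p * m + p + c := by ring
  have k3 : p * m + (c + p) = p * m + p + c := by ring
  rw [k1, k2, k3]
  set N := p * m + p + c with hN
  rw [Nat.choose_succ_succ N m]
  have hmN : m ≤ N := by omega
  have habs := absorb N m hmN
  have hNcast : ((N : ℚ)) = (p : ℚ) * m + p + c := by rw [hN]; push_cast; ring
  rw [hNcast] at habs
  push_cast
  have hpq : (1:ℚ) ≤ (p:ℚ) := by exact_mod_cast hp
  have hmq : (0:ℚ) ≤ (m:ℚ) := by positivity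
  have hcq : (0:ℚ) ≤ (c:ℚ) := by positivity
  have hD : ((p : ℚ) * ((m : ℚ) + 1) + (c : ℚ)) ≠ 0 := by nlinarith
  have hD1 : ((p : ℚ) * ((m : ℚ) + 1) + ((c : ℚ) + 1)) ≠ 0 := by nlinarith
  have e3 : ((p : ℚ) * (m : ℚ) + ((c : ℚ) + (p : ℚ))) = (p : ℚ) * ((m : ℚ) + 1) + (c : ℚ) := by
    ring
  rw [e3, div_mul_eq_mul_div, div_mul_eq_mul_div, div_mul_eq_mul_div, ← add_div,
    div_eq_div_iff hD1 hD]
  linear_combination (p : ℚ) * habs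

/-- The convolution identity `B^a · B^c = B^{a+c}` at the level of coefficients. -/
lemma V_conv (p a : ℕ) (hp : 1 ≤ p) :
    ∀ m c, ∑ j ∈ range (m + 1), V p a j * V p c (m - j) = V p (a + c) m := by
  intro m
  induction m using Nat.strong_induction_on with
  | _ m ih =>
    cases m with
    | zero => intro c; simp [V_zero_right]
    | succ m' =>
      intro c
      induction c with
      | zero =>
        rw [Finset.sum_eq_single_of_mem (m' + 1) (self_mem_range_succ (m' + 1))]
        · simp [V_zero_right]
        · intro j hj hne
          rw [V_zero_left p (m' + 1 - j) (by simp only [mem_range] at hj; omega), mul_zero]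
      | succ c' ihc =>
        rw [Finset.sum_range_succ]
        have hsplit : ∀ j ∈ range (m' + 1),
            V p a j * V p (c' + 1) (m' + 1 - j)
              = V p a j * V p c' (m' + 1 - j) + V p a j * V p (c' + p) (m' - j) := by
          intro j hj
          simp only [mem_range] at hj
          have e1 : m' + 1 - j = (m' - j) + 1 := by omega
          rw [e1, V_rec p c' (m' - j) hp, mul_add, ← e1]
        rw [Finset.sum_congr rfl hsplit, Finset.sum_add_distrib]
        have h1 : ∑ j ∈ range (m' + 1), V p a j * V p c' (m' + 1 - j)
            = V p (a + c') (m' + 1) - V p a (m' + 1) := by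
          have h := Finset.sum_range_succ (fun j => V p a j * V p c' (m' + 1 - j)) (m' + 1)
          rw [ihc] at h
          simp only [Nat.sub_self, V_zero_right, mul_one] at h
          linarith
        have h2 : ∑ j ∈ range (m' + 1), V p a j * V p (c' + p) (m' - j)
            = V p (a + (c' + p)) m' := ih m' (Nat.lt_succ_self m') (c' + p)
        rw [h1, h2, Nat.sub_self, V_zero_right]
        have e2 : a + (c' + 1) = (a + c') + 1 := by omega
        have e3 : a + (c' + p) = (a + c') + p := by omega
        rw [e2, e3, V_rec p (a + c') m' hp]
        ring

/-- Expressing the weighted numbers via two unweighted binomial coefficients. -/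
lemma V_U (p c m : ℕ) (hp : 1 ≤ p) :
    V p (c + 1) (m + 1) = U p c (m + 1) - ((p : ℚ) - 1) * U p (c + p) m := by
  have hmul : p * (m + 1) = p * m + p := by ring
  have hN1 : p * (m + 1) + (c + 1) ≠ 0 := by omega
  rw [V_formula _ _ _ hN1, U, U]
  have k1 : p * (m + 1) + (c + 1) = (p * (m + 1) + c) + 1 := by ring
  have k3 : p * m + (c + p) = p * (m + 1) + c := by ring
  rw [k1, k3]
  set N := p * (m + 1) + c with hN
  rw [Nat.choose_succ_succ N m]
  have hm1 : 1 * m ≤ p * m := Nat.mul_le_mul_right m hp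
  have hmN : m ≤ N := by omega
  have habs := absorb N m hmN
  have hNcast : ((N : ℚ)) = (p : ℚ) * ((m : ℚ) + 1) + c := by rw [hN]; push_cast; ring
  rw [hNcast] at habs
  push_cast
  have hpq : (1:ℚ) ≤ (p:ℚ) := by exact_mod_cast hp
  have hmq : (0:ℚ) ≤ (m:ℚ) := by positivity
  have hcq : (0:ℚ) ≤ (c:ℚ) := by positivity
  have hD1 : ((p : ℚ) * ((m : ℚ) + 1) + ((c : ℚ) + 1)) ≠ 0 := by nlinarith
  rw [div_mul_eq_mul_div, div_eq_iff hD1]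
  linear_combination (-(p : ℚ)) * habs

/-- The key identity: convolving `V p 1` with a row of unweighted binomials. -/
lemma T_eq (p : ℕ) (hp : 1 ≤ p) :
    ∀ m c, ∑ j ∈ range (m + 1), V p 1 j * U p c (m - j) = U p (c + 1) m := by
  intro m
  induction m using Nat.strong_induction_on with
  | _ m ih =>
    cases m with
    | zero => intro c; simp [V_zero_right, U_zero_right]
    | succ m' =>
      intro c
      have hconv := V_conv p 1 hp (m' + 1) (c + 1)
      rw [Finset.sum_range_succ] at hconv
      have hsplit : ∀ j ∈ range (m' + 1),
          V p 1 j * V p (c + 1) (m' + 1 - j)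
            = V p 1 j * U p c (m' + 1 - j)
              - ((p : ℚ) - 1) * (V p 1 j * U p (c + p) (m' - j)) := by
        intro j hj
        simp only [mem_range] at hj
        have e1 : m' + 1 - j = (m' - j) + 1 := by omega
        rw [e1, V_U p c (m' - j) hp, ← e1]
        ring
      rw [Finset.sum_congr rfl hsplit, Finset.sum_sub_distrib, ← Finset.mul_sum] at hconv
      have h2 : ∑ j ∈ range (m' + 1), V p 1 j * U p (c + p) (m' - j)
          = U p (c + p + 1) m' := ih m' (Nat.lt_succ_self m') (c + p)
      have h1 : ∑ j ∈ range (m' + 1), V p 1 j * U p c (m' + 1 - j)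
          = (∑ j ∈ range (m' + 1 + 1), V p 1 j * U p c (m' + 1 - j))
              - V p 1 (m' + 1) := by
        have h := Finset.sum_range_succ (fun j => V p 1 j * U p c (m' + 1 - j)) (m' + 1)
        simp only [Nat.sub_self, U_zero_right, mul_one] at h
        rw [h]; ring
      rw [h1, h2, Nat.sub_self, V_zero_right, mul_one] at hconv
      have hR : V p (1 + (c + 1)) (m' + 1)
          = U p (c + 1) (m' + 1) - ((p : ℚ) - 1) * U p (c + 1 + p) m' := by
        have e : 1 + (c + 1) = (c + 1) + 1 := by omega
        rw [e, V_U p (c + 1) m' hp]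
      rw [hR] at hconv
      have e4 : c + 1 + p = c + p + 1 := by omega
      rw [e4] at hconv
      linarith

end CatConv

/-- For `p ≥ 2`, `r ≥ 0`, `n ≥ k ≥ 1`:
`Σ_{j=0}^{n} (1/(pj+1))·C(pj+1, j)·C(p(n−j)+r, n−j−k+1) = C(pn+r+1, n−k+1)`. -/
theorem generalized_catalan_convolution (p r n k : ℕ)
    (hp : 2 ≤ p) (hk : 1 ≤ k) (hkn : k ≤ n) :
    ∑ j ∈ Finset.range (n + 1),
        (1 / ((p : ℚ) * j + 1)) * ((p * j + 1).choose j : ℚ)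
          * ichoose (p * (n - j) + r) ((n : ℤ) - j - k + 1)
      = ((p * n + r + 1).choose (n - k + 1) : ℚ) := by
  obtain ⟨k', rfl⟩ : ∃ k', k = k' + 1 := ⟨k - 1, by omega⟩
  obtain ⟨m, hm1, rfl⟩ : ∃ m, 1 ≤ m ∧ n = m + k' := ⟨n - k', by omega, by omega⟩
  have hp1 : 1 ≤ p := by omega
  have key := CatConv.T_eq p hp1 m (p * k' + r)
  have hsub : Finset.range (m + 1) ⊆ Finset.range (m + k' + 1) :=
    Finset.range_subset_range.mpr (by omega)
  have hzero : ∀ j ∈ Finset.range (m + k' + 1), j ∉ Finset.range (m + 1) →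
      (1 / ((p : ℚ) * j + 1)) * ((p * j + 1).choose j : ℚ)
        * ichoose (p * (m + k' - j) + r) (((m + k' : ℕ) : ℤ) - j - ((k' + 1 : ℕ) : ℤ) + 1)
        = 0 := by
    intro j hj hj'
    simp only [Finset.mem_range] at hj hj'
    have hneg : ((m + k' : ℕ) : ℤ) - j - ((k' + 1 : ℕ) : ℤ) + 1 < 0 := by push_cast; omega
    rw [ichoose, if_pos hneg, mul_zero]
  rw [← Finset.sum_subset hsub hzero]
  have hcongr : ∀ j ∈ Finset.range (m + 1),
      (1 / ((p : ℚ) * j + 1)) * ((p * j + 1).choose j : ℚ)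
        * ichoose (p * (m + k' - j) + r) (((m + k' : ℕ) : ℤ) - j - ((k' + 1 : ℕ) : ℤ) + 1)
        = CatConv.V p 1 j * CatConv.U p (p * k' + r) (m - j) := by
    intro j hj
    simp only [Finset.mem_range] at hj
    have hjm : j ≤ m := by omega
    have harg : ((m + k' : ℕ) : ℤ) - j - ((k' + 1 : ℕ) : ℤ) + 1 = ((m - j : ℕ) : ℤ) := by
      push_cast [Nat.cast_sub hjm]; omega
    have hup : p * (m + k' - j) + r = p * (m - j) + (p * k' + r) := by
      have e : m + k' - j = (m - j) + k' := by omega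
      rw [e]; ring
    rw [harg, hup]
    have hich : ichoose (p * (m - j) + (p * k' + r)) ((m - j : ℕ) : ℤ)
        = CatConv.U p (p * k' + r) (m - j) := by
      rw [ichoose, if_neg (by omega), Int.toNat_natCast, CatConv.U]
    rw [hich]
    congr 1
    rw [CatConv.V_formula p 1 j (by omega)]
    push_cast
    ring
  rw [Finset.sum_congr rfl hcongr, key]
  have e1 : m + k' - (k' + 1) + 1 = m := by omega
  have e2 : p * (m + k') + r + 1 = p * m + (p * k' + r + 1) := by ring
  rw [CatConv.U, e1, e2]
end

section
/- For all integers p ≥ 1, r ≥ 0 and n ≥ k ≥ s ≥ 1, the following identity holds in ℚ: Σ_{j=s}^{n} [ 2ps/((2p−1)j + s) ]·C(2pj−1, j−s) · [ ((p−1)(n−j) + r + k − s + 1)/(p(n−j) + r + 1) ]·C(2(p(n−j)+r+1), n−j−k+s) = [ ((p−1)n + r + k + 1)/(pn + r + 1) ]·C(2(pn+r+1), n−k). -/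
/-- The convolution sum `Σ_{i+m=N} C(x+iz,i) C(y+mz,m)`. -/
def Uq (z x y N : ℕ) : ℚ :=
  ∑ q ∈ Finset.HasAntidiagonal.antidiagonal N,
    ((x + q.1 * z).choose q.1 : ℚ) * ((y + q.2 * z).choose q.2 : ℚ)

lemma Uq_zero (z x y : ℕ) : Uq z x y 0 = 1 := by
  simp [Uq]

lemma Uq_pascal (z x y N : ℕ) :
    Uq z (x + 1) y (N + 1) = Uq z x y (N + 1) + Uq z (x + z) y N := by
  unfold Uq
  rw [Finset.Nat.sum_antidiagonal_succ, Finset.Nat.sum_antidiagonal_succ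
    (f := fun q => ((x + q.1 * z).choose q.1 : ℚ) * ((y + q.2 * z).choose q.2 : ℚ))]
  simp only [Nat.choose_zero_right, Nat.cast_one, one_mul, zero_mul, add_zero]
  rw [add_assoc, ← Finset.sum_add_distrib]
  congr 1
  apply Finset.sum_congr rfl
  intro q _
  have h1 : x + 1 + (q.1 + 1) * z = (x + (q.1 + 1) * z) + 1 := by ring
  have h2 : x + z + q.1 * z = x + (q.1 + 1) * z := by ring
  rw [h1, h2, Nat.choose_succ_succ]
  push_cast
  ring

lemma chooseZ (w i : ℕ) :
    ((i + 1) * (w + 1)).choose (i + 1) = (w + 1) * ((w + i * (w + 1)).choose i) := by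
  apply Nat.eq_of_mul_eq_mul_left (Nat.succ_pos i)
  have h := Nat.add_one_mul_choose_eq (w + i * (w + 1)) i
  have e : w + i * (w + 1) + 1 = (i + 1) * (w + 1) := by ring
  rw [e] at h
  calc (i + 1) * ((i + 1) * (w + 1)).choose (i + 1)
      = ((i + 1) * (w + 1)).choose (i + 1) * (i + 1) := by ring
    _ = (i + 1) * (w + 1) * ((w + i * (w + 1)).choose i) := h.symm
    _ = (i + 1) * ((w + 1) * ((w + i * (w + 1)).choose i)) := by ring

lemma L2 (w y N : ℕ) : ∀ x : ℕ, Uq (w + 1) x y (N + 1)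
    = (w + 1) * Uq (w + 1) (x + w) y N
      + (((x + y + (N + 1) * (w + 1)).choose (N + 1) : ℕ) : ℚ) := by
  induction N with
  | zero =>
    intro x
    rw [Uq_zero, Uq]
    rw [Finset.Nat.sum_antidiagonal_succ, Finset.Nat.antidiagonal_zero]
    simp only [Finset.sum_singleton, Nat.choose_zero_right, Nat.choose_one_right,
      Nat.zero_add, Nat.add_zero, Nat.zero_mul, Nat.one_mul, Nat.mul_one, zero_add]
    norm_num [Nat.choose_one_right]
    push_cast
    ring
  | succ N ih =>
    intro x
    induction x with
    | zero =>
      rw [Uq]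
      rw [Finset.Nat.sum_antidiagonal_succ]
      have hper : ∀ q ∈ Finset.HasAntidiagonal.antidiagonal (N + 1),
          (((0 + (q.1 + 1) * (w + 1)).choose (q.1 + 1) : ℕ) : ℚ)
              * (((y + q.2 * (w + 1)).choose q.2 : ℕ) : ℚ)
          = ((w : ℚ) + 1) * ((((w + q.1 * (w + 1)).choose q.1 : ℕ) : ℚ)
              * (((y + q.2 * (w + 1)).choose q.2 : ℕ) : ℚ)) := by
        intro q _
        rw [zero_add, chooseZ]
        push_cast
        ring
      rw [Finset.sum_congr rfl hper, ← Finset.mul_sum]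
      rw [show (0 + w : ℕ) = w from by omega]
      rw [Uq]
      simp only [Nat.choose_zero_right, Nat.cast_one, one_mul, zero_add]
      ring
    | succ x ihx =>
      have pas := Uq_pascal (w + 1) x y (N + 1)
      have pas2 := Uq_pascal (w + 1) (x + w) y N
      have ihB := ih (x + w + 1)
      have e1 : x + w + (w + 1) = x + w + 1 + w := by ring
      rw [e1] at pas2
      have e2' : x + w + 1 + y + (N + 1) * (w + 1) = x + y + (N + 2) * (w + 1) := by ring
      rw [e2'] at ihB
      have e3 : x + (w + 1) = x + w + 1 := by ring
      rw [e3] at pas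
      have e4 : x + 1 + w = x + w + 1 := by ring
      rw [e4]
      have pasc : ((x + 1 + y + (N + 1 + 1) * (w + 1)).choose (N + 1 + 1) : ℚ)
          = ((x + y + (N + 1 + 1) * (w + 1)).choose (N + 1 + 1) : ℚ)
            + ((x + y + (N + 1 + 1) * (w + 1)).choose (N + 1) : ℚ) := by
        have e5 : x + 1 + y + (N + 1 + 1) * (w + 1) = (x + y + (N + 1 + 1) * (w + 1)) + 1 := by
          ring
        rw [e5, Nat.choose_succ_succ]
        push_cast
        ring
      have e6 : x + y + (N + 2) * (w + 1) = x + y + (N + 1 + 1) * (w + 1) := by ring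
      rw [e6] at ihB
      rw [pas, pasc, ihx]
      linear_combination ihB - ((w : ℚ) + 1) * pas2

lemma Aterm (w v i : ℕ) :
    ((v : ℚ) + 1) / ((v : ℚ) + 1 + ((i : ℚ) + 1) * ((w : ℚ) + 1))
        * (((v + 1 + (i + 1) * (w + 1)).choose (i + 1) : ℕ) : ℚ)
    = (((v + 1 + (i + 1) * (w + 1)).choose (i + 1) : ℕ) : ℚ)
      - ((w : ℚ) + 1) * (((v + 1 + w + i * (w + 1)).choose i : ℕ) : ℚ) := by
  have key : (v + 1 + (i + 1) * (w + 1)) * ((v + 1 + w + i * (w + 1)).choose i)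
      = (v + 1 + (i + 1) * (w + 1)).choose (i + 1) * (i + 1) := by
    have h := Nat.add_one_mul_choose_eq (v + 1 + w + i * (w + 1)) i
    have e : v + 1 + w + i * (w + 1) + 1 = v + 1 + (i + 1) * (w + 1) := by ring
    rw [e] at h
    exact h
  have keyQ : ((v : ℚ) + 1 + ((i : ℚ) + 1) * ((w : ℚ) + 1))
        * (((v + 1 + w + i * (w + 1)).choose i : ℕ) : ℚ)
      = (((v + 1 + (i + 1) * (w + 1)).choose (i + 1) : ℕ) : ℚ) * ((i : ℚ) + 1) := by
    exact_mod_cast key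
  have hden : (v : ℚ) + 1 + ((i : ℚ) + 1) * ((w : ℚ) + 1) ≠ 0 := by positivity
  rw [div_mul_eq_mul_div, div_eq_iff hden]
  linear_combination ((w : ℚ) + 1) * keyQ

lemma R1' (w v y N : ℕ) :
    ∑ q ∈ Finset.HasAntidiagonal.antidiagonal N,
      ((v : ℚ) + 1) / ((v : ℚ) + 1 + (q.1 : ℚ) * ((w : ℚ) + 1))
        * (((v + 1 + q.1 * (w + 1)).choose q.1 : ℕ) : ℚ)
        * (((y + q.2 * (w + 1)).choose q.2 : ℕ) : ℚ)
    = (((v + 1 + y + N * (w + 1)).choose N : ℕ) : ℚ) := by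
  cases N with
  | zero =>
    simp [Finset.Nat.antidiagonal_zero]
    exact (by positivity : (v : ℚ) + 1 ≠ 0)
  | succ M =>
    rw [Finset.Nat.sum_antidiagonal_succ]
    have hper : ∀ q ∈ Finset.HasAntidiagonal.antidiagonal M,
        ((v : ℚ) + 1) / ((v : ℚ) + 1 + ((q.1 + 1 : ℕ) : ℚ) * ((w : ℚ) + 1))
          * (((v + 1 + (q.1 + 1) * (w + 1)).choose (q.1 + 1) : ℕ) : ℚ)
          * (((y + q.2 * (w + 1)).choose q.2 : ℕ) : ℚ)
        = (((v + 1 + (q.1 + 1) * (w + 1)).choose (q.1 + 1) : ℕ) : ℚ)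
            * (((y + q.2 * (w + 1)).choose q.2 : ℕ) : ℚ)
          - ((w : ℚ) + 1) * ((((v + 1 + w) + q.1 * (w + 1)).choose q.1 : ℕ) : ℚ)
            * (((y + q.2 * (w + 1)).choose q.2 : ℕ) : ℚ) := by
      intro q _
      have := Aterm w v q.1
      push_cast
      push_cast at this
      linear_combination (((y + q.2 * (w + 1)).choose q.2 : ℕ) : ℚ) * this
    rw [Finset.sum_congr rfl hper, Finset.sum_sub_distrib]
    have hU1 : Uq (w + 1) (v + 1) y (M + 1)
        = (((v + 1 + 0 * (w + 1)).choose 0 : ℕ) : ℚ)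
            * (((y + (M + 1) * (w + 1)).choose (M + 1) : ℕ) : ℚ)
          + ∑ q ∈ Finset.HasAntidiagonal.antidiagonal M,
            (((v + 1 + (q.1 + 1) * (w + 1)).choose (q.1 + 1) : ℕ) : ℚ)
              * (((y + q.2 * (w + 1)).choose q.2 : ℕ) : ℚ) := by
      rw [Uq, Finset.Nat.sum_antidiagonal_succ]
    have hU2 : Uq (w + 1) (v + 1 + w) y M
        = ∑ q ∈ Finset.HasAntidiagonal.antidiagonal M,
            ((((v + 1 + w) + q.1 * (w + 1)).choose q.1 : ℕ) : ℚ)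
              * (((y + q.2 * (w + 1)).choose q.2 : ℕ) : ℚ) := by
      rw [Uq]
    have hY : ∑ q ∈ Finset.HasAntidiagonal.antidiagonal M,
        (((w : ℚ) + 1) * ((((v + 1 + w) + q.1 * (w + 1)).choose q.1 : ℕ) : ℚ)
          * (((y + q.2 * (w + 1)).choose q.2 : ℕ) : ℚ))
        = ((w : ℚ) + 1) * Uq (w + 1) (v + 1 + w) y M := by
      rw [hU2, Finset.mul_sum]
      exact Finset.sum_congr rfl fun q _ => by ring
    rw [hY]
    have hL2 := L2 w y M (v + 1)
    simp only [Nat.cast_zero, zero_mul, add_zero, Nat.zero_mul, Nat.choose_zero_right,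
      Nat.cast_one, mul_one, one_mul, Nat.cast_ofNat] at hU1 ⊢
    rw [div_self (by positivity : (v : ℚ) + 1 ≠ 0), one_mul]
    linear_combination hL2 - hU1

lemma R1 (z x y N : ℕ) (hz : 1 ≤ z) (hx : 1 ≤ x) :
    ∑ i ∈ Finset.range (N + 1),
      (x : ℚ) / ((x : ℚ) + (i : ℚ) * (z : ℚ))
        * (((x + i * z).choose i : ℕ) : ℚ)
        * (((y + (N - i) * z).choose (N - i) : ℕ) : ℚ)
    = (((x + y + N * z).choose N : ℕ) : ℚ) := by
  obtain ⟨w, rfl⟩ : ∃ w, z = w + 1 := ⟨z - 1, by omega⟩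
  obtain ⟨v, rfl⟩ : ∃ v, x = v + 1 := ⟨x - 1, by omega⟩
  have h := R1' w v y N
  rw [Finset.Nat.sum_antidiagonal_eq_sum_range_succ
    (fun a b => ((v : ℚ) + 1) / ((v : ℚ) + 1 + (a : ℚ) * ((w : ℚ) + 1))
        * (((v + 1 + a * (w + 1)).choose a : ℕ) : ℚ)
        * (((y + b * (w + 1)).choose b : ℕ) : ℚ)) N] at h
  have e : ∀ i ∈ Finset.range (N + 1),
      ((v + 1 : ℕ) : ℚ) / (((v + 1 : ℕ) : ℚ) + (i : ℚ) * ((w + 1 : ℕ) : ℚ))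
        * (((v + 1 + i * (w + 1)).choose i : ℕ) : ℚ)
        * (((y + (N - i) * (w + 1)).choose (N - i) : ℕ) : ℚ)
      = ((v : ℚ) + 1) / ((v : ℚ) + 1 + (i : ℚ) * ((w : ℚ) + 1))
        * (((v + 1 + i * (w + 1)).choose i : ℕ) : ℚ)
        * (((y + (N - i) * (w + 1)).choose (N - i) : ℕ) : ℚ) := by
    intro i _
    push_cast
    ring
  rw [Finset.sum_congr rfl e]
  exact h

lemma decomp (a l : ℕ) (h : l + 1 ≤ a) :
    ((a : ℚ) - ((l : ℚ) + 1)) / (a : ℚ) * (((2 * a).choose (l + 1) : ℕ) : ℚ)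
    = (((2 * a - 1).choose (l + 1) : ℕ) : ℚ) - (((2 * a - 1).choose l : ℕ) : ℚ) := by
  have ha : (0 : ℚ) < (a : ℚ) := by
    have : 1 ≤ a := by omega
    exact_mod_cast Nat.lt_of_lt_of_le Nat.zero_lt_one this
  have pas : (2 * a).choose (l + 1) = (2 * a - 1).choose l + (2 * a - 1).choose (l + 1) := by
    have e2 : 2 * a = (2 * a - 1) + 1 := by omega
    rw [e2]
    exact Nat.choose_succ_succ _ _
  have key := Nat.choose_succ_right_eq (2 * a - 1) l
  -- key : (2*a-1).choose (l+1) * (l+1) = (2*a-1).choose l * (2*a-1 - l)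
  have key2 : (2 * a - 1).choose (l + 1) * (l + 1) + (2 * a - 1).choose l * (l + 1)
      = (2 * a - 1).choose l * (2 * a) := by
    have e3 : (2 * a - 1 - l) + (l + 1) = 2 * a := by omega
    calc (2 * a - 1).choose (l + 1) * (l + 1) + (2 * a - 1).choose l * (l + 1)
        = (2 * a - 1).choose l * (2 * a - 1 - l) + (2 * a - 1).choose l * (l + 1) := by rw [key]
      _ = (2 * a - 1).choose l * ((2 * a - 1 - l) + (l + 1)) := by ring
      _ = (2 * a - 1).choose l * (2 * a) := by rw [e3]
  have key2Q : (((2 * a - 1).choose (l + 1) : ℕ) : ℚ) * ((l : ℚ) + 1)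
      + (((2 * a - 1).choose l : ℕ) : ℚ) * ((l : ℚ) + 1)
      = (((2 * a - 1).choose l : ℕ) : ℚ) * (2 * (a : ℚ)) := by exact_mod_cast key2
  have pasQ : (((2 * a).choose (l + 1) : ℕ) : ℚ)
      = (((2 * a - 1).choose l : ℕ) : ℚ) + (((2 * a - 1).choose (l + 1) : ℕ) : ℚ) := by
    exact_mod_cast pas
  rw [div_mul_eq_mul_div, div_eq_iff ha.ne']
  linear_combination ((a : ℚ) - (l : ℚ) - 1) * pasQ - key2Q

lemma ballotA (p s i : ℕ) (hp : 1 ≤ p) (hs : 1 ≤ s) :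
    2 * (p : ℚ) * (s : ℚ) / ((2 * (p : ℚ) - 1) * ((s + i : ℕ) : ℚ) + (s : ℚ))
        * (((2 * p * (s + i) - 1).choose (s + i - s) : ℕ) : ℚ)
    = ((2 * p * s : ℕ) : ℚ) / (((2 * p * s : ℕ) : ℚ) + (i : ℚ) * ((2 * p : ℕ) : ℚ))
        * (((2 * p * s + i * (2 * p)).choose i : ℕ) : ℚ) := by
  have e1 : s + i - s = i := by omega
  have e2 : 2 * p * s + i * (2 * p) = 2 * p * (s + i) := by ring
  set M := 2 * p * (s + i) with hM
  have h2M : 2 * (s + i) ≤ M := by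
    rw [hM]
    have : 2 * (s + i) ≤ 2 * p * (s + i) := by
      have := Nat.mul_le_mul_right (s + i) (by omega : 2 ≤ 2 * p)
      exact this
    exact this
  have hiM : i + 1 ≤ M - i := by omega
  have key : M * ((M - 1).choose i) = M.choose i * (M - i) := by
    have h1 := Nat.add_one_mul_choose_eq (M - 1) i
    have e3 : M - 1 + 1 = M := by omega
    rw [e3] at h1
    exact h1.trans (Nat.choose_succ_right_eq M i)
  have hsub : ((M - i : ℕ) : ℚ) = (M : ℚ) - (i : ℚ) := by
    have : i ≤ M := by omega
    push_cast [this]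
    ring
  have keyQ : (M : ℚ) * (((M - 1).choose i : ℕ) : ℚ)
      = ((M.choose i : ℕ) : ℚ) * ((M : ℚ) - (i : ℚ)) := by
    rw [← hsub]
    exact_mod_cast key
  have hd1 : (2 * (p : ℚ) - 1) * ((s + i : ℕ) : ℚ) + (s : ℚ) = (M : ℚ) - (i : ℚ) := by
    rw [hM]
    push_cast
    ring
  have hd2 : ((2 * p * s : ℕ) : ℚ) + (i : ℚ) * ((2 * p : ℕ) : ℚ) = (M : ℚ) := by
    rw [hM]
    push_cast
    ring
  have hMpos : (0 : ℚ) < (M : ℚ) := by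
    have : 1 ≤ M := by omega
    exact_mod_cast Nat.lt_of_lt_of_le Nat.zero_lt_one this
  have hMipos : (0 : ℚ) < (M : ℚ) - (i : ℚ) := by
    have : (0 : ℚ) < ((M - i : ℕ) : ℚ) := by
      have : 1 ≤ M - i := by omega
      exact_mod_cast Nat.lt_of_lt_of_le Nat.zero_lt_one this
    rwa [hsub] at this
  rw [e1, e2, hd1, hd2]
  rw [div_mul_eq_mul_div, div_mul_eq_mul_div, div_eq_div_iff hMipos.ne' hMpos.ne']
  have hc : ((2 * p * s : ℕ) : ℚ) = 2 * (p : ℚ) * (s : ℚ) := by push_cast; ring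
  rw [hc]
  linear_combination 2 * (p : ℚ) * (s : ℚ) * keyQ

/-- The identity coming from Catalan's triangle: for `p ≥ 1`, `r ≥ 0`, `n ≥ k ≥ s ≥ 1`,
`Σ_{j=s}^{n} (2ps/((2p−1)j+s))·C(2pj−1, j−s) ·
  (((p−1)(n−j)+r+k−s+1)/(p(n−j)+r+1))·C(2(p(n−j)+r+1), n−j−k+s)
  = (((p−1)n+r+k+1)/(pn+r+1))·C(2(pn+r+1), n−k)`. -/
theorem catalan_triangle_extraction_identity (p r n k s : ℕ)
    (hp : 1 ≤ p) (hs : 1 ≤ s) (hsk : s ≤ k) (hkn : k ≤ n) :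
    ∑ j ∈ Finset.Icc s n,
        (2 * (p : ℚ) * s / ((2 * (p : ℚ) - 1) * j + s)) * ((2 * p * j - 1).choose (j - s) : ℚ)
          * ((((p : ℚ) - 1) * ((n : ℚ) - j) + r + k - s + 1)
              / ((p : ℚ) * ((n : ℚ) - j) + r + 1))
          * ichoose (2 * (p * (n - j) + r + 1)) ((n : ℤ) - j - k + s)
      = ((((p : ℚ) - 1) * n + r + k + 1) / ((p : ℚ) * n + r + 1))
          * ((2 * (p * n + r + 1)).choose (n - k) : ℚ) := by
  have hsub : Finset.Icc s (n - k + s) ⊆ Finset.Icc s n := by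
    apply Finset.Icc_subset_Icc_right; omega
  rw [← Finset.sum_subset hsub (by
    intro j hj hnj
    simp only [Finset.mem_Icc] at hj hnj
    have hlt : (n : ℤ) - j - k + s < 0 := by omega
    rw [ichoose, if_pos hlt, mul_zero])]
  rw [← Finset.Ico_add_one_right_eq_Icc, Finset.sum_Ico_eq_sum_range]
  rw [show n - k + s + 1 - s = n - k + 1 from by omega]
  rcases Nat.lt_or_ge k n with hkn' | hkn'
  · -- main case k < n
    obtain ⟨N2, hN2⟩ : ∃ N2, n - k = N2 + 1 := ⟨n - k - 1, by omega⟩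
    rw [hN2]
    have hn : (n : ℚ) = (k : ℚ) + (N2 : ℚ) + 1 := by
      exact_mod_cast congrArg (Nat.cast : ℕ → ℚ) (by omega : n = k + N2 + 1)
    have key : ∀ i ∈ Finset.range (N2 + 1 + 1),
        2 * (p : ℚ) * (s : ℚ) / ((2 * (p : ℚ) - 1) * ((s + i : ℕ) : ℚ) + (s : ℚ))
            * (((2 * p * (s + i) - 1).choose (s + i - s) : ℕ) : ℚ)
            * ((((p : ℚ) - 1) * ((n : ℚ) - ((s + i : ℕ) : ℚ)) + (r : ℚ) + (k : ℚ) - (s : ℚ) + 1)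
                / ((p : ℚ) * ((n : ℚ) - ((s + i : ℕ) : ℚ)) + (r : ℚ) + 1))
            * ichoose (2 * (p * (n - (s + i)) + r + 1)) ((n : ℤ) - ((s + i : ℕ) : ℤ) - (k : ℤ) + (s : ℤ))
        = ((2 * p * s : ℕ) : ℚ) / (((2 * p * s : ℕ) : ℚ) + (i : ℚ) * ((2 * p : ℕ) : ℚ))
            * (((2 * p * s + i * (2 * p)).choose i : ℕ) : ℚ)
            * ((((2 * p * (k - s) + 2 * r + 1) + (N2 + 1 - i) * (2 * p)).choose (N2 + 1 - i) : ℕ) : ℚ)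
          - (if i ≤ N2 then
              ((2 * p * s : ℕ) : ℚ) / (((2 * p * s : ℕ) : ℚ) + (i : ℚ) * ((2 * p : ℕ) : ℚ))
                * (((2 * p * s + i * (2 * p)).choose i : ℕ) : ℚ)
                * ((((2 * p * (k - s) + 2 * r + 1 + 2 * p) + (N2 - i) * (2 * p)).choose (N2 - i) : ℕ) : ℚ)
            else 0) := by
      intro i hi
      simp only [Finset.mem_range] at hi
      rw [ballotA p s i hp hs]
      rcases Nat.lt_or_ge i (N2 + 1) with hiN | hiN
      · have hiN2 : i ≤ N2 := by omega
        rw [if_pos hiN2]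
        have hsin : s + i ≤ n := by omega
        have hz : (n : ℤ) - ((s + i : ℕ) : ℤ) - (k : ℤ) + (s : ℤ) = ((N2 + 1 - i : ℕ) : ℤ) := by
          omega
        simp only [ichoose]
        rw [hz, if_neg (by omega : ¬ ((N2 + 1 - i : ℕ) : ℤ) < 0), Int.toNat_natCast]
        rw [show N2 + 1 - i = (N2 - i) + 1 from by omega]
        have hiN2' : N2 - i + 1 ≤ p * (n - (s + i)) + r + 1 := by
          have h1 : n - (s + i) ≤ p * (n - (s + i)) := Nat.le_mul_of_pos_left _ (by omega)
          omega
        have hcast1 : ((n - (s + i) : ℕ) : ℚ) = (n : ℚ) - ((s + i : ℕ) : ℚ) :=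
          Nat.cast_sub hsin
        have hcast2 : ((N2 - i : ℕ) : ℚ) = (N2 : ℚ) - (i : ℚ) := Nat.cast_sub hiN2
        have hpre : (((p : ℚ) - 1) * ((n : ℚ) - ((s + i : ℕ) : ℚ)) + (r : ℚ) + (k : ℚ) - (s : ℚ) + 1)
              / ((p : ℚ) * ((n : ℚ) - ((s + i : ℕ) : ℚ)) + (r : ℚ) + 1)
            = (((p * (n - (s + i)) + r + 1 : ℕ) : ℚ) - (((N2 - i : ℕ) : ℚ) + 1))
              / ((p * (n - (s + i)) + r + 1 : ℕ) : ℚ) := by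
          push_cast [hcast1, hcast2]
          rw [hn]
          congr 1 <;> ring
        rw [hpre]
        have hdec := decomp (p * (n - (s + i)) + r + 1) (N2 - i) hiN2'
        have c1 : 2 * p * (k - s) + 2 * r + 1 + (N2 - i + 1) * (2 * p)
            = 2 * (p * (n - (s + i)) + r + 1) - 1 := by
          have ha : n - (s + i) = (k - s) + (N2 - i + 1) := by omega
          rw [ha]
          have hb : 2 * p * (k - s) + 2 * r + 1 + (N2 - i + 1) * (2 * p) + 1
              = 2 * (p * ((k - s) + (N2 - i + 1)) + r + 1) := by ring
          omega
        have c2 : 2 * p * (k - s) + 2 * r + 1 + 2 * p + (N2 - i) * (2 * p)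
            = 2 * (p * (n - (s + i)) + r + 1) - 1 := by
          have ha : n - (s + i) = (k - s) + (N2 - i + 1) := by omega
          rw [ha]
          have hb : 2 * p * (k - s) + 2 * r + 1 + 2 * p + (N2 - i) * (2 * p) + 1
              = 2 * (p * ((k - s) + (N2 - i + 1)) + r + 1) := by ring
          omega
        rw [c1, c2]
        linear_combination (((2 * p * s : ℕ) : ℚ)
            / (((2 * p * s : ℕ) : ℚ) + (i : ℚ) * ((2 * p : ℕ) : ℚ))
            * (((2 * p * s + i * (2 * p)).choose i : ℕ) : ℚ)) * hdec
      · have hieq : i = N2 + 1 := by omega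
        subst hieq
        rw [if_neg (by omega)]
        have hz : (n : ℤ) - ((s + (N2 + 1) : ℕ) : ℤ) - (k : ℤ) + (s : ℤ) = (0 : ℤ) := by omega
        simp only [ichoose]
        rw [hz, if_neg (by omega : ¬ (0 : ℤ) < 0)]
        rw [show N2 + 1 - (N2 + 1) = 0 from by omega]
        simp only [Int.toNat_zero, Nat.choose_zero_right, Nat.cast_one, mul_one, zero_mul,
          Nat.zero_mul, add_zero, Nat.add_zero, sub_zero]
        have hsin : s + (N2 + 1) ≤ n := by omega
        have hnum : ((p : ℚ) - 1) * ((n : ℚ) - ((s + (N2 + 1) : ℕ) : ℚ)) + (r : ℚ) + (k : ℚ)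
              - (s : ℚ) + 1
            = (p : ℚ) * ((n : ℚ) - ((s + (N2 + 1) : ℕ) : ℚ)) + (r : ℚ) + 1 := by
          push_cast
          linear_combination -hn
        have hden : (p : ℚ) * ((n : ℚ) - ((s + (N2 + 1) : ℕ) : ℚ)) + (r : ℚ) + 1 ≠ 0 := by
          have h1 : ((n - (s + (N2 + 1)) : ℕ) : ℚ) = (n : ℚ) - ((s + (N2 + 1) : ℕ) : ℚ) :=
            Nat.cast_sub hsin
          rw [← h1]
          positivity
        rw [hnum, div_self hden, mul_one]
    rw [Finset.sum_congr rfl key, Finset.sum_sub_distrib]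
    rw [Finset.sum_range_succ
      (f := fun i => if i ≤ N2 then
            ((2 * p * s : ℕ) : ℚ) / (((2 * p * s : ℕ) : ℚ) + (i : ℚ) * ((2 * p : ℕ) : ℚ))
              * (((2 * p * s + i * (2 * p)).choose i : ℕ) : ℚ)
              * ((((2 * p * (k - s) + 2 * r + 1 + 2 * p) + (N2 - i) * (2 * p)).choose (N2 - i) : ℕ) : ℚ)
          else 0)]
    rw [if_neg (by omega), add_zero]
    rw [Finset.sum_congr rfl (fun i hi => if_pos (by simp only [Finset.mem_range] at hi; omega))]
    have h2ps : 1 ≤ 2 * p * s := by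
      have h2 : 2 * p * s = 2 * (p * s) := by ring
      have h3 : 1 * 1 ≤ p * s := Nat.mul_le_mul hp hs
      omega
    rw [R1 (2 * p) (2 * p * s) (2 * p * (k - s) + 2 * r + 1) (N2 + 1) (by omega) h2ps]
    rw [R1 (2 * p) (2 * p * s) (2 * p * (k - s) + 2 * r + 1 + 2 * p) N2 (by omega) h2ps]
    have hd1 : 2 * p * s + (2 * p * (k - s) + 2 * r + 1) + (N2 + 1) * (2 * p)
        = 2 * (p * n + r + 1) - 1 := by
      have ha : n = s + (k - s) + (N2 + 1) := by omega
      rw [ha]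
      have hb : 2 * p * s + (2 * p * (k - s) + 2 * r + 1) + (N2 + 1) * (2 * p) + 1
          = 2 * (p * (s + (k - s) + (N2 + 1)) + r + 1) := by ring
      omega
    have hd2 : 2 * p * s + (2 * p * (k - s) + 2 * r + 1 + 2 * p) + N2 * (2 * p)
        = 2 * (p * n + r + 1) - 1 := by
      have ha : n = s + (k - s) + (N2 + 1) := by omega
      rw [ha]
      have hb : 2 * p * s + (2 * p * (k - s) + 2 * r + 1 + 2 * p) + N2 * (2 * p) + 1
          = 2 * (p * (s + (k - s) + (N2 + 1)) + r + 1) := by ring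
      omega
    rw [hd1, hd2]
    have hpn : N2 + 1 ≤ p * n + r + 1 := by
      have h1 : n ≤ p * n := Nat.le_mul_of_pos_left _ (by omega)
      omega
    have hdec := decomp (p * n + r + 1) N2 hpn
    have hpre2 : (((p : ℚ) - 1) * (n : ℚ) + (r : ℚ) + (k : ℚ) + 1)
          / ((p : ℚ) * (n : ℚ) + (r : ℚ) + 1)
        = (((p * n + r + 1 : ℕ) : ℚ) - ((N2 : ℚ) + 1)) / ((p * n + r + 1 : ℕ) : ℚ) := by
      push_cast
      rw [hn]
      congr 1 <;> ring
    rw [hpre2]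
    linear_combination -hdec
  · -- case k = n
    have hk : k = n := by omega
    subst hk
    rw [show k - k = 0 from by omega, Finset.sum_range_one]
    simp only [Nat.add_zero]
    rw [show s - s = 0 from by omega]
    rw [show (k : ℤ) - (s : ℤ) - (k : ℤ) + (s : ℤ) = 0 from by omega]
    simp only [ichoose]
    rw [if_neg (by omega : ¬ (0 : ℤ) < 0)]
    simp only [Int.toNat_zero, Nat.choose_zero_right, Nat.cast_one, mul_one]
    have hp' : (1 : ℚ) ≤ (p : ℚ) := by exact_mod_cast hp
    have hs' : (1 : ℚ) ≤ (s : ℚ) := by exact_mod_cast hs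
    have hk' : (s : ℚ) ≤ (k : ℚ) := by exact_mod_cast hsk
    have h1 : (2 * (p : ℚ) - 1) * (s : ℚ) + (s : ℚ) = 2 * (p : ℚ) * (s : ℚ) := by ring
    have h2ps : (2 * (p : ℚ) * (s : ℚ)) ≠ 0 := by nlinarith
    rw [h1, div_self h2ps]
    have h2 : ((p : ℚ) - 1) * ((k : ℚ) - (s : ℚ)) + (r : ℚ) + (k : ℚ) - (s : ℚ) + 1
        = (p : ℚ) * ((k : ℚ) - (s : ℚ)) + (r : ℚ) + 1 := by ring
    have hden1 : (p : ℚ) * ((k : ℚ) - (s : ℚ)) + (r : ℚ) + 1 ≠ 0 := by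
      have h4 : (0 : ℚ) ≤ (p : ℚ) * ((k : ℚ) - (s : ℚ)) :=
        mul_nonneg (by positivity) (by linarith)
      have h5 : (0 : ℚ) ≤ (r : ℚ) := by positivity
      intro hcon
      nlinarith
    rw [h2, div_self hden1]
    have h3 : ((p : ℚ) - 1) * (k : ℚ) + (r : ℚ) + (k : ℚ) + 1
        = (p : ℚ) * (k : ℚ) + (r : ℚ) + 1 := by ring
    have hden2 : (p : ℚ) * (k : ℚ) + (r : ℚ) + 1 ≠ 0 := by positivity
    rw [h3, div_self hden2]
    norm_num
end

section
/- Let p ≥ 2 be an integer and let x and y be real numbers such that (p+1)i + x ≠ 0 for 0 ≤ i ≤ n, p(n−i) + y + 1 ≠ 0 for 0 ≤ i ≤ n, and pn + x + y + 1 ≠ 0. Then Σ_{i=0}^{n} [ x/((p+1)i + x) ]·C((p+1)i + x, i) · [ ((p−1)(n−i) + y + 1)/(p(n−i) + y + 1) ]·C((p+1)(n−i) + y, n−i) = [ ((p−1)n + x + y + 1)/(pn + x + y + 1) ]·C((p+1)n + x + y, n), where for a real number z and a natural number m, C(z, m) = z(z−1)⋯(z−m+1)/m! is the generalized binomial coefficient.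 -/
open Finset Polynomial

/-- Generalized binomial coefficient `C(z, m) = z(z−1)⋯(z−m+1)/m!` for a real number `z`
and a natural number `m`, with `C(z, 0) = 1`. -/
noncomputable def genChoose (z : ℝ) (m : ℕ) : ℝ :=
  (∏ i ∈ Finset.range m, (z - i)) / (Nat.factorial m : ℝ)

noncomputable def Fc (z x : ℝ) : ℕ → ℝ
  | 0 => 1
  | (k+1) => ((Nat.factorial (k+1) : ℝ))⁻¹ *
      (x * ∏ j ∈ Finset.range k, (x + ((k : ℝ)+1)*z - ((j : ℝ)+1)))

noncomputable def Gc (z y : ℝ) (k : ℕ) : ℝ := genChoose (y + k*z) k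

lemma genChoose_pascal (a : ℝ) (k : ℕ) :
    genChoose a (k+1) = genChoose (a-1) (k+1) + genChoose (a-1) k := by
  unfold genChoose
  have h1 : ∏ i ∈ Finset.range (k+1), (a - i) = (∏ i ∈ Finset.range k, (a - 1 - i)) * a := by
    rw [Finset.prod_range_succ']
    simp only [Nat.cast_zero, sub_zero]
    congr 1
    exact Finset.prod_congr rfl fun j _ => by push_cast; ring
  have h2 : ∏ i ∈ Finset.range (k+1), (a - 1 - i) =
      (∏ i ∈ Finset.range k, (a - 1 - i)) * (a - 1 - k) := Finset.prod_range_succ _ _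
  rw [h1, h2, Nat.factorial_succ]
  have hk : (Nat.factorial k : ℝ) ≠ 0 := Nat.cast_ne_zero.mpr (Nat.factorial_ne_zero k)
  have hk1 : ((k:ℝ)+1) ≠ 0 := by positivity
  push_cast
  field_simp
  ring


lemma Gc_pascal (z y : ℝ) (k : ℕ) :
    Gc z y (k+1) = Gc z (y-1) (k+1) + Gc z (y+z-1) k := by
  unfold Gc
  have e1 : (y-1) + ((k+1 : ℕ):ℝ)*z = (y + ((k+1:ℕ):ℝ)*z) - 1 := by ring
  have e2 : (y+z-1) + (k:ℝ)*z = (y + ((k+1:ℕ):ℝ)*z) - 1 := by push_cast; ring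
  rw [e1, e2, genChoose_pascal]

lemma Fc_eq (z x : ℝ) (k : ℕ) :
    Fc z x (k+1) = Gc z x (k+1) - z * Gc z (x+z-1) k := by
  unfold Fc Gc genChoose
  have h1 : ∏ i ∈ Finset.range (k+1), (x + ((k+1:ℕ):ℝ)*z - i)
      = (∏ j ∈ Finset.range k, (x + ((k : ℝ)+1)*z - ((j : ℝ)+1))) * (x + ((k:ℝ)+1)*z) := by
    rw [Finset.prod_range_succ']
    simp only [Nat.cast_zero, sub_zero]
    congr 1
    · exact Finset.prod_congr rfl fun j _ => by push_cast; ring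
    · push_cast; ring
  have h2 : ∏ i ∈ Finset.range k, (x + z - 1 + (k:ℝ)*z - i)
      = ∏ j ∈ Finset.range k, (x + ((k : ℝ)+1)*z - ((j : ℝ)+1)) :=
    Finset.prod_congr rfl fun j _ => by ring
  rw [h1, h2]
  have hk : (Nat.factorial k : ℝ) ≠ 0 := Nat.cast_ne_zero.mpr (Nat.factorial_ne_zero k)
  have hk1 : ((k:ℝ)+1) ≠ 0 := by positivity
  simp only [Nat.factorial_succ, Nat.cast_mul, Nat.cast_add, Nat.cast_one]
  field_simp
  ring

lemma Fc_pascal (z x : ℝ) (k : ℕ) :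
    Fc z x (k+1) = Fc z (x-1) (k+1) + Fc z (x+z-1) k := by
  cases k with
  | zero => simp [Fc]
  | succ t =>
    rw [Fc_eq, Fc_eq, Fc_eq, Gc_pascal z x (t+1), Gc_pascal z (x+z-1) t]
    have e1 : x+z-1-1 = x-1+z-1 := by ring
    rw [e1]
    ring_nf


/-- polynomial (in x) version of `Fc`. -/
noncomputable def Fp (z : ℝ) : ℕ → Polynomial ℝ
  | 0 => 1
  | (k+1) => Polynomial.C ((Nat.factorial (k+1) : ℝ))⁻¹ *
      (Polynomial.X * ∏ j ∈ Finset.range k,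
        (Polynomial.X + Polynomial.C (((k : ℝ)+1)*z - ((j : ℝ)+1))))

lemma Fp_eval (z x : ℝ) (k : ℕ) : (Fp z k).eval x = Fc z x k := by
  cases k with
  | zero => simp [Fp, Fc]
  | succ t =>
    simp only [Fp, Fc, eval_mul, eval_C, eval_X, eval_prod, eval_add]
    congr 2
    exact Finset.prod_congr rfl fun j _ => by ring

lemma Fc_zero (z : ℝ) (k : ℕ) : Fc z 0 (k+1) = 0 := by simp [Fc]

lemma periodic_poly_zero (q : Polynomial ℝ) (hper : ∀ x : ℝ, q.eval x = q.eval (x-1))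
    (h0 : q.eval 0 = 0) : ∀ x : ℝ, q.eval x = 0 := by
  have hn : ∀ m : ℕ, q.eval (m : ℝ) = 0 := by
    intro m
    induction m with
    | zero => simpa using h0
    | succ t ih =>
      have := hper ((t:ℝ)+1)
      push_cast
      rw [this]
      simpa using ih
  have hq : q = 0 := by
    apply Polynomial.eq_zero_of_infinite_isRoot
    exact Set.Infinite.mono (by rintro r ⟨m, rfl⟩; exact hn m)
      (Set.infinite_range_of_injective (Nat.cast_injective (R := ℝ)))
  simp [hq]

/-- Hagen–Rothe convolution identity (form B). -/
theorem rothe (z y : ℝ) : ∀ n : ℕ, ∀ x : ℝ,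
    ∑ k ∈ Finset.range (n+1), Fc z x k * Gc z y (n-k) = Gc z (x+y) n := by
  intro n
  induction n with
  | zero => intro x; simp [Fc, Gc, genChoose]
  | succ n ih =>
    -- the difference as a polynomial in x
    set q : Polynomial ℝ :=
      (∑ k ∈ Finset.range (n+2), Fp z k * Polynomial.C (Gc z y (n+1-k))) -
        (Polynomial.C ((Nat.factorial (n+1) : ℝ))⁻¹ *
          ∏ i ∈ Finset.range (n+1), (Polynomial.X + Polynomial.C (y + ((n:ℝ)+1)*z - (i:ℝ))))
      with hqdef
    have hqe : ∀ x : ℝ, q.eval x =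
        (∑ k ∈ Finset.range (n+2), Fc z x k * Gc z y (n+1-k)) - Gc z (x+y) (n+1) := by
      intro x
      simp only [hqdef, eval_sub, eval_finset_sum, eval_mul, eval_C, Fp_eval, eval_prod,
        eval_add, eval_X]
      congr 1
      unfold Gc genChoose
      rw [mul_comm, div_eq_mul_inv]
      congr 1
      exact Finset.prod_congr rfl fun i _ => by push_cast; ring
    have hper : ∀ x : ℝ, q.eval x = q.eval (x-1) := by
      intro x
      rw [hqe, hqe]
      have hB : (∑ k ∈ Finset.range (n+2), Fc z x k * Gc z y (n+1-k))
          - (∑ k ∈ Finset.range (n+2), Fc z (x-1) k * Gc z y (n+1-k))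
          = Gc z ((x+z-1)+y) n := by
        rw [← Finset.sum_sub_distrib]
        have : ∀ k, (Fc z x k - Fc z (x-1) k) * Gc z y (n+1-k)
            = Fc z x k * Gc z y (n+1-k) - Fc z (x-1) k * Gc z y (n+1-k) := fun k => by ring
        simp only [← this]
        rw [Finset.sum_range_succ']
        have h0t : Fc z x 0 - Fc z (x-1) 0 = 0 := by simp [Fc]
        rw [h0t, zero_mul, add_zero, ← ih (x+z-1)]
        apply Finset.sum_congr rfl
        intro j _
        have hsub : n+1-(j+1) = n-j := by omega
        rw [hsub, Fc_pascal z x j]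
        ring
      have hG : Gc z (x+y) (n+1) - Gc z ((x-1)+y) (n+1) = Gc z ((x+z-1)+y) n := by
        rw [Gc_pascal z (x+y) n]
        rw [show (x+y)-1 = (x-1)+y by ring, show (x+y)+z-1 = (x+z-1)+y by ring]
        ring
      linarith [hB, hG]
    have h0 : q.eval 0 = 0 := by
      rw [hqe]
      rw [Finset.sum_range_succ']
      simp only [Fc_zero, zero_mul, Finset.sum_const_zero, zero_add]
      simp [Fc, Gc]
    intro x
    have := periodic_poly_zero q hper h0 x
    rw [hqe] at this
    linarith [this]


lemma genChoose_succ_mul (b : ℝ) (t : ℕ) :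
    genChoose b (t+1) * ((t:ℝ)+1) = genChoose b t * (b - t) := by
  unfold genChoose
  rw [Finset.prod_range_succ, Nat.factorial_succ]
  have hk : (Nat.factorial t : ℝ) ≠ 0 := Nat.cast_ne_zero.mpr (Nat.factorial_ne_zero t)
  have hk1 : ((t:ℝ)+1) ≠ 0 := by positivity
  push_cast
  field_simp

/-- rewriting the first pair of factors. -/
lemma stepA (p : ℕ) (x : ℝ) (i : ℕ) (h : ((p:ℝ)+1)*i + x ≠ 0) :
    x / (((p:ℝ)+1)*i + x) * genChoose (((p:ℝ)+1)*i + x) i = Fc ((p:ℝ)+1) x i := by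
  cases i with
  | zero =>
    simp only [Nat.cast_zero, mul_zero, zero_add] at h ⊢
    simp [Fc, genChoose, div_self h]
  | succ k =>
    have hprod : ∏ j ∈ Finset.range (k+1), ((((p:ℝ)+1)*((k:ℝ)+1) + x) - j)
        = (∏ j ∈ Finset.range k, (x + ((k:ℝ)+1)*((p:ℝ)+1) - ((j:ℝ)+1))) *
            (((p:ℝ)+1)*((k:ℝ)+1) + x) := by
      rw [Finset.prod_range_succ']
      simp only [Nat.cast_zero, sub_zero]
      congr 1
      exact Finset.prod_congr rfl fun j _ => by push_cast; ring
    rw [show (((k+1:ℕ)):ℝ) = ((k:ℝ)+1) by push_cast; ring] at *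
    show _ = ((Nat.factorial (k+1) : ℝ))⁻¹ *
      (x * ∏ j ∈ Finset.range k, (x + ((k : ℝ)+1)*((p:ℝ)+1) - ((j : ℝ)+1)))
    unfold genChoose
    rw [hprod]
    have hf : (Nat.factorial (k+1) : ℝ) ≠ 0 := Nat.cast_ne_zero.mpr (Nat.factorial_ne_zero _)
    field_simp

/-- rewriting the second pair of factors, for `m = t+1 ≥ 1`. -/
lemma stepB (p : ℕ) (y : ℝ) (t : ℕ) (h : (p:ℝ)*((t:ℝ)+1) + y + 1 ≠ 0) :
    (((p:ℝ)-1)*((t:ℝ)+1) + y + 1)/((p:ℝ)*((t:ℝ)+1) + y + 1)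
        * genChoose (((p:ℝ)+1)*((t:ℝ)+1) + y) (t+1)
      = Gc ((p:ℝ)+1) y (t+1) - Gc ((p:ℝ)+1) (y + ((p:ℝ)+1)) t := by
  set b : ℝ := ((p:ℝ)+1)*((t:ℝ)+1) + y with hb
  have e1 : Gc ((p:ℝ)+1) y (t+1) = genChoose b (t+1) := by
    unfold Gc; congr 1; push_cast; ring
  have e2 : Gc ((p:ℝ)+1) (y + ((p:ℝ)+1)) t = genChoose b t := by
    unfold Gc; congr 1; push_cast; ring
  have hbt : b - (t:ℝ) = (p:ℝ)*((t:ℝ)+1) + y + 1 := by rw [hb]; ring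
  rw [e1, e2]
  rw [div_mul_eq_mul_div, div_eq_iff h, ← hbt]
  have key := genChoose_succ_mul b t
  have hnum : ((p:ℝ)-1)*((t:ℝ)+1) + y + 1 = (b - t) - ((t:ℝ)+1) := by rw [hb]; ring
  rw [hnum]
  linear_combination -key


noncomputable def Jc (z y : ℝ) : ℕ → ℝ
  | 0 => 0
  | (t+1) => Gc z (y+z) t
/-- For an integer `p ≥ 2` and real `x`, `y` with nonvanishing denominators:
`Σ_{i=0}^{n} (x/((p+1)i+x))·C((p+1)i+x, i) ·
  (((p−1)(n−i)+y+1)/(p(n−i)+y+1))·C((p+1)(n−i)+y, n−i)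
  = (((p−1)n+x+y+1)/(pn+x+y+1))·C((p+1)n+x+y, n)`. -/
theorem convolution_identity_real (p : ℕ) (hp : 2 ≤ p) (n : ℕ) (x y : ℝ)
    (hx : ∀ i ≤ n, ((p : ℝ) + 1) * i + x ≠ 0)
    (hy : ∀ i ≤ n, (p : ℝ) * ((n : ℝ) - i) + y + 1 ≠ 0)
    (hxy : (p : ℝ) * n + x + y + 1 ≠ 0) :
    ∑ i ∈ Finset.range (n + 1),
        (x / (((p : ℝ) + 1) * i + x)) * genChoose (((p : ℝ) + 1) * i + x) i
          * ((((p : ℝ) - 1) * ((n : ℝ) - i) + y + 1) / ((p : ℝ) * ((n : ℝ) - i) + y + 1))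
          * genChoose (((p : ℝ) + 1) * ((n : ℝ) - i) + y) (n - i)
      = ((((p : ℝ) - 1) * n + x + y + 1) / ((p : ℝ) * n + x + y + 1))
          * genChoose (((p : ℝ) + 1) * n + x + y) n := by
  -- rewrite each summand
  have hterm : ∀ i ∈ Finset.range (n+1),
      (x / (((p : ℝ) + 1) * i + x)) * genChoose (((p : ℝ) + 1) * i + x) i
          * ((((p : ℝ) - 1) * ((n : ℝ) - i) + y + 1) / ((p : ℝ) * ((n : ℝ) - i) + y + 1))
          * genChoose (((p : ℝ) + 1) * ((n : ℝ) - i) + y) (n - i)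
        = Fc ((p:ℝ)+1) x i * (Gc ((p:ℝ)+1) y (n-i) - Jc ((p:ℝ)+1) y (n-i)) := by
    intro i hi0
    have hi : i ≤ n := by simpa [Nat.lt_succ_iff] using hi0
    have hcast : (n:ℝ) - (i:ℝ) = ((n - i : ℕ) : ℝ) := by
      rw [Nat.cast_sub hi]
    rw [hcast]
    have hA := stepA p x i (hx i hi)
    have hyi := hy i hi
    rw [hcast] at hyi
    rw [mul_assoc, mul_assoc, ← mul_assoc (_ / _) _ _]
    rw [hA]
    congr 1
    cases hnm : n - i with
    | zero =>
      rw [hnm] at hyi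
      simp only [Nat.cast_zero, mul_zero, zero_add] at hyi ⊢
      simp [Gc, Jc, genChoose, div_self hyi]
    | succ t =>
      rw [hnm] at hyi
      push_cast at hyi ⊢
      rw [stepB p y t hyi]
      simp [Jc]
  rw [Finset.sum_congr rfl hterm]
  -- split the sum
  have hsplit : ∑ i ∈ Finset.range (n+1),
      Fc ((p:ℝ)+1) x i * (Gc ((p:ℝ)+1) y (n-i) - Jc ((p:ℝ)+1) y (n-i))
      = (∑ i ∈ Finset.range (n+1), Fc ((p:ℝ)+1) x i * Gc ((p:ℝ)+1) y (n-i))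
        - ∑ i ∈ Finset.range (n+1), Fc ((p:ℝ)+1) x i * Jc ((p:ℝ)+1) y (n-i) := by
    rw [← Finset.sum_sub_distrib]
    exact Finset.sum_congr rfl fun i _ => by ring
  rw [hsplit, rothe]
  cases n with
  | zero =>
    have h0 : x + y + 1 ≠ 0 := by simpa using hxy
    simp [Fc, Gc, Jc, genChoose, div_self h0]
  | succ s =>
    -- second sum
    have hJ : ∑ i ∈ Finset.range (s+2), Fc ((p:ℝ)+1) x i * Jc ((p:ℝ)+1) y (s+1-i)
        = Gc ((p:ℝ)+1) (x+(y+((p:ℝ)+1))) s := by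
      rw [Finset.sum_range_succ]
      have h1 : s + 1 - (s+1) = 0 := by omega
      rw [h1]
      simp only [Jc, mul_zero, add_zero]
      rw [← rothe ((p:ℝ)+1) (y+((p:ℝ)+1)) s x]
      apply Finset.sum_congr rfl
      intro i hi0
      have hi : i ≤ s := by simpa [Nat.lt_succ_iff] using hi0
      have h2 : s + 1 - i = (s - i) + 1 := by omega
      rw [h2]
    rw [hJ]
    -- right-hand side
    have hxy' : (p:ℝ)*((s:ℝ)+1) + (x+y) + 1 ≠ 0 := by
      intro hc; apply hxy; push_cast; linarith
    have hB := stepB p (x+y) s hxy'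
    have e1 : (((p:ℝ)-1)*((s+1:ℕ):ℝ) + x + y + 1) = (((p:ℝ)-1)*((s:ℝ)+1) + (x+y) + 1) := by
      push_cast; ring
    have e2 : ((p:ℝ)*((s+1:ℕ):ℝ) + x + y + 1) = ((p:ℝ)*((s:ℝ)+1) + (x+y) + 1) := by
      push_cast; ring
    have e3 : (((p:ℝ)+1)*((s+1:ℕ):ℝ) + x + y) = (((p:ℝ)+1)*((s:ℝ)+1) + (x+y)) := by
      push_cast; ring
    rw [e1, e2, e3, hB]
    have e4 : x + (y + ((p:ℝ)+1)) = (x+y) + ((p:ℝ)+1) := by ring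
    rw [e4]
end

section
/- Fix an integer p ≥ 2. For an integer y ≥ 0, define the formal power series over ℚ: 𝒜(p, y; t) = Σ_{n≥0} [ ((p−1)n + y + 1)/(pn + y + 1) ]·C((p+1)n + y, n)·t^n, and let B_{p+1}(t) be the unique formal power series satisfying B_{p+1}(t) = 1 + t·(B_{p+1}(t))^{p+1}. Then for all integers x ≥ 0 and y ≥ 0, (B_{p+1}(t))^x · 𝒜(p, y; t) = 𝒜(p, x + y; t) as formal power series over ℚ. -/
open PowerSeries


/-- The formal power series
`𝒜(p, y; t) = Σ_{n≥0} (((p−1)n+y+1)/(pn+y+1))·C((p+1)n+y, n)·t^n` over `ℚ`. -/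
noncomputable def seriesA (p y : ℕ) : PowerSeries ℚ :=
  PowerSeries.mk fun n =>
    ((((p : ℚ) - 1) * n + y + 1) / ((p : ℚ) * n + y + 1)) * (((p + 1) * n + y).choose n : ℚ)

/-- Ballot-style difference form of the coefficients. -/
noncomputable def dQ (p y n : ℕ) : ℚ :=
  (((p + 1) * n + y).choose n : ℚ) - (if n = 0 then 0 else (((p + 1) * n + y).choose (n - 1) : ℚ))

lemma seriesA_eq_mk_dQ (p y : ℕ) : seriesA p y = PowerSeries.mk (dQ p y) := by
  ext n
  simp only [seriesA, PowerSeries.coeff_mk]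
  match n with
  | 0 =>
    simp [dQ]
    exact Nat.cast_add_one_ne_zero y
  | (n+1) =>
    rw [dQ, if_neg (Nat.succ_ne_zero n), Nat.add_sub_cancel]
    have key : (((p+1)*(n+1)+y).choose (n+1)) * (n+1)
        = ((p+1)*(n+1)+y).choose n * (p*(n+1)+y+1) := by
      have h := Nat.choose_succ_right_eq ((p+1)*(n+1)+y) n
      have h2 : (p+1)*(n+1)+y - n = p*(n+1)+y+1 := by
        have : (p+1)*(n+1) = p*(n+1) + (n+1) := by ring
        omega
      rw [h2] at h
      exact h
    have keyq : ((((p+1)*(n+1)+y).choose (n+1)) : ℚ) * ((n:ℚ)+1)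
        = (((p+1)*(n+1)+y).choose n : ℚ) * ((p:ℚ)*((n:ℚ)+1)+y+1) := by
      exact_mod_cast congrArg (Nat.cast : ℕ → ℚ) key
    have hd : (p : ℚ) * ((n:ℚ)+1) + y + 1 ≠ 0 := by positivity
    push_cast
    field_simp
    linear_combination -keyq

lemma seriesA_shift (p y : ℕ) :
    seriesA p (y+1) = seriesA p y + PowerSeries.X * seriesA p (y+p+1) := by
  simp only [seriesA_eq_mk_dQ]
  ext n
  rw [map_add, PowerSeries.coeff_mk]
  match n with
  | 0 =>
    simp [dQ]
  | (n+1) =>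
    rw [PowerSeries.coeff_succ_X_mul, PowerSeries.coeff_mk, PowerSeries.coeff_mk]
    match n with
    | 0 =>
      simp [dQ, Nat.choose_one_right]
      push_cast
      ring
    | (k+1) =>
      rw [dQ, dQ, dQ, if_neg (by omega : ¬ (k+1+1 = 0)), if_neg (by omega : ¬ (k+1+1 = 0)),
        if_neg (by omega : ¬ (k+1 = 0)), Nat.add_sub_cancel, Nat.add_sub_cancel]
      rw [show (p+1)*(k+1+1)+(y+1) = ((p+1)*(k+1+1)+y)+1 by omega,
          show (p+1)*(k+1)+(y+p+1) = (p+1)*(k+1+1)+y by ring,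
          Nat.choose_succ_succ, Nat.choose_succ_succ]
      push_cast
      ring

lemma uniq (p : ℕ) (F G : ℕ → PowerSeries ℚ)
    (hF : ∀ y, F (y+1) = F y + PowerSeries.X * F (y+p+1))
    (hG : ∀ y, G (y+1) = G y + PowerSeries.X * G (y+p+1))
    (h0 : F 0 = G 0) : ∀ y, F y = G y := by
  suffices h : ∀ n y, PowerSeries.coeff n (F y) = PowerSeries.coeff n (G y) from
    fun y => PowerSeries.ext fun n => h n y
  intro n
  induction n using Nat.strong_induction_on with
  | _ n ih =>
    intro y
    induction y with
    | zero => rw [h0]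
    | succ y ihy =>
      rw [hF, hG, map_add, map_add, ihy]
      congr 1
      match n with
      | 0 => simp
      | (m+1) =>
        rw [PowerSeries.coeff_succ_X_mul, PowerSeries.coeff_succ_X_mul, ih m (Nat.lt_succ_self m)]

/-- For `p ≥ 2` and the generalized binomial series `B_{p+1}(t)` (the unique formal power
series with `B_{p+1}(t) = 1 + t·B_{p+1}(t)^{p+1}`), one has
`(B_{p+1}(t))^x · 𝒜(p, y; t) = 𝒜(p, x+y; t)` for all integers `x, y ≥ 0`. -/
theorem seriesA_mul_binomial_pow (p : ℕ) (hp : 2 ≤ p) (B : PowerSeries ℚ)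
    (hB : B = 1 + PowerSeries.X * B ^ (p + 1)) (x y : ℕ) :
    B ^ x * seriesA p y = seriesA p (x + y) := by
  have key : ∀ z, B ^ z * seriesA p 0 = seriesA p z := by
    refine uniq p (fun z => B ^ z * seriesA p 0) (fun z => seriesA p z) ?_ (fun z => seriesA_shift p z) (by simp)
    intro z
    calc B ^ (z+1) * seriesA p 0 = (1 + PowerSeries.X * B ^ (p+1)) * (B ^ z * seriesA p 0) := by
          rw [← hB]; ring
      _ = B ^ z * seriesA p 0 + PowerSeries.X * (B ^ (z+p+1) * seriesA p 0) := by ring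
  rw [← key y, ← key (x+y), ← mul_assoc, ← pow_add]
end
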